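/- arXiv:1601.06867 — 5 statements merged into one kernel-verified Lean document; each statement's English description precedes it below -/
import Mathlib

section
/- Let π_q(X) denote the number of monic irreducible polynomials of degree X over F_q. Then for all X ≥ 1, q^X/X − 2·q^{X/2}/X ≤ π_q(X) ≤ q^X/X. -/
open Polynomial

/-- `π_q(X)`: the number of monic irreducible polynomials of degree exactly `X`
over the finite field `Fq`. -/
noncomputable def piq (Fq : Type) [Field Fq] [Fintype Fq] (X : ℕ) : ℕ :=
  Nat.card {f : Polynomial Fq // f.Monic ∧ f.natDegree = X ∧ Irreducible f}

namespace PNTpoly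

variable {Fq : Type} [Field Fq] [Fintype Fq]

/-- The polynomial `X^(q^n) - X` over `Fq`. -/
noncomputable abbrev gp (Fq : Type) [Field Fq] [Fintype Fq] (n : ℕ) : Fq[X] :=
  X ^ (Fintype.card Fq) ^ n - X

/-- The splitting field of `X^(q^n) - X` over `Fq`: a model of `F_{q^n}`. -/
noncomputable abbrev K (Fq : Type) [Field Fq] [Fintype Fq] (n : ℕ) := (gp Fq n).SplittingField

lemma char_dvd_card : ringChar Fq ∣ Fintype.card Fq := by
  obtain ⟨m, hp, hq⟩ := FiniteField.card Fq (ringChar Fq)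
  rw [hq]
  exact dvd_pow_self _ (by positivity)

lemma gp_sep (n : ℕ) (hn : n ≠ 0) : (gp Fq n).Separable :=
  galois_poly_separable (ringChar Fq) _ (char_dvd_card.trans (dvd_pow_self _ hn))

lemma gp_ne_zero (n : ℕ) (hn : n ≠ 0) : gp Fq n ≠ 0 :=
  FiniteField.X_pow_card_pow_sub_X_ne_zero _ hn Fintype.one_lt_card

lemma gp_natDegree (n : ℕ) (hn : n ≠ 0) : (gp Fq n).natDegree = (Fintype.card Fq) ^ n :=
  FiniteField.X_pow_card_pow_sub_X_natDegree_eq _ hn Fintype.one_lt_card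

noncomputable instance (n : ℕ) : Fintype (K Fq n) := Fintype.ofFinite _

lemma forall_pow_card_eq (n : ℕ) (hn : n ≠ 0) :
    ∀ x : K Fq n, x ^ (Fintype.card Fq) ^ n = x := by
  obtain ⟨m, hp, hq⟩ := FiniteField.card Fq (ringChar Fq)
  set p := ringChar Fq
  haveI : Fact p.Prime := ⟨hp⟩
  haveI : CharP (K Fq n) p :=
    charP_of_injective_algebraMap (algebraMap Fq (K Fq n)).injective p
  have hqe : (Fintype.card Fq) ^ n = p ^ ((m : ℕ) * n) := by rw [hq, ← pow_mul]
  have hS : ∀ x : K Fq n, x ∈ (gp Fq n).rootSet (K Fq n) → x ^ (Fintype.card Fq) ^ n = x := by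
    intro x hx
    rw [mem_rootSet_of_ne (gp_ne_zero n hn)] at hx
    simpa [gp, sub_eq_zero] using hx
  let S : Subalgebra Fq (K Fq n) :=
  { carrier := {x | x ^ (Fintype.card Fq) ^ n = x}
    mul_mem' := by
      intro a b ha hb
      simp only [Set.mem_setOf_eq] at *
      rw [mul_pow, ha, hb]
    one_mem' := by simp
    add_mem' := by
      intro a b ha hb
      simp only [Set.mem_setOf_eq] at *
      rw [hqe] at *
      rw [add_pow_char_pow, ha, hb]
    zero_mem' := by simp [pos_iff_ne_zero.mp (pow_pos Fintype.card_pos n)]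
    algebraMap_mem' := by
      intro r
      simp only [Set.mem_setOf_eq]
      rw [← map_pow, FiniteField.pow_card_pow] }
  have htop : (⊤ : Subalgebra Fq (K Fq n)) ≤ S := by
    rw [← Polynomial.SplittingField.adjoin_rootSet (gp Fq n)]
    exact Algebra.adjoin_le hS
  intro x
  exact htop (Algebra.mem_top)

lemma card_K (n : ℕ) (hn : n ≠ 0) : Fintype.card (K Fq n) = (Fintype.card Fq) ^ n := by
  classical
  have hroot : (gp Fq n).rootSet (K Fq n) = Set.univ := by
    ext x
    simp only [Set.mem_univ, iff_true, mem_rootSet_of_ne (gp_ne_zero n hn)]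
    simp [gp, sub_eq_zero, forall_pow_card_eq n hn x]
  have hcard : Fintype.card ((gp Fq n).rootSet (K Fq n)) = (gp Fq n).natDegree :=
    card_rootSet_eq_natDegree (gp_sep n hn) (SplittingField.splits _)
  rw [gp_natDegree n hn] at hcard
  rw [← hcard, ← Nat.card_eq_fintype_card, ← Nat.card_eq_fintype_card, hroot, Nat.card_univ]

lemma finrank_K (n : ℕ) (hn : n ≠ 0) : Module.finrank Fq (K Fq n) = n := by
  have h1 : Fintype.card (K Fq n) = (Fintype.card Fq) ^ (Module.finrank Fq (K Fq n)) :=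
    Module.card_eq_pow_finrank
  rw [card_K n hn] at h1
  exact (Nat.pow_right_injective Fintype.one_lt_card h1.symm)

lemma minpoly_deg_dvd (n : ℕ) (hn : n ≠ 0) (x : K Fq n) : (minpoly Fq x).natDegree ∣ n := by
  have hint : IsIntegral Fq x := Algebra.IsIntegral.isIntegral x
  have := minpoly.degree_dvd hint
  rwa [finrank_K n hn] at this

lemma dvd_gp_of_irreducible {f : Fq[X]} (hf : Irreducible f) (hm : f.Monic)
    {n : ℕ} (hdvd : f.natDegree ∣ n) : f ∣ gp Fq n := by
  haveI := Fact.mk hf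
  haveI : Module.Finite Fq (AdjoinRoot f) := (AdjoinRoot.powerBasis hf.ne_zero).finite
  haveI : Finite (AdjoinRoot f) := Module.finite_of_finite Fq
  haveI : Fintype (AdjoinRoot f) := Fintype.ofFinite _
  have hcard : Fintype.card (AdjoinRoot f) = (Fintype.card Fq) ^ f.natDegree := by
    rw [Module.card_eq_pow_finrank (K := Fq) (V := AdjoinRoot f),
      (AdjoinRoot.powerBasis hf.ne_zero).finrank, AdjoinRoot.powerBasis_dim]
  obtain ⟨k, rfl⟩ := hdvd
  set α := AdjoinRoot.root f
  have hroot : α ^ (Fintype.card Fq) ^ (f.natDegree * k) = α := by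
    rw [pow_mul, ← hcard, FiniteField.pow_card_pow]
  have haev : (aeval α) (gp Fq (f.natDegree * k)) = 0 := by
    simp [gp, hroot, sub_eq_zero]
  have hminp : minpoly Fq α = f := by
    rw [AdjoinRoot.minpoly_root hf.ne_zero, hm.leadingCoeff, inv_one, map_one, mul_one]
  calc f = minpoly Fq α := hminp.symm
    _ ∣ _ := minpoly.dvd _ _ haev

/-- The monic irreducible polynomials of degree `d` arising as minimal polynomials of
elements of `K Fq n`. -/
noncomputable def Td (Fq : Type) [Field Fq] [Fintype Fq] (n d : ℕ) [DecidableEq Fq[X]] :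
    Finset (Fq[X]) :=
  ((Finset.univ : Finset (K Fq n)).image (minpoly Fq)).filter (fun f => f.natDegree = d)

lemma exists_root {n : ℕ} (hn : n ≠ 0) {f : Fq[X]} (hf : Irreducible f) (hm : f.Monic)
    (hdvd : f.natDegree ∣ n) : ∃ x : K Fq n, minpoly Fq x = f := by
  have hfd : f ∣ gp Fq n := dvd_gp_of_irreducible hf hm hdvd
  have hsp : Splits (f.map (algebraMap Fq (K Fq n))) :=
    (SplittingField.splits _).of_dvd (map_ne_zero (gp_ne_zero n hn)) (Polynomial.map_dvd _ hfd)
  have hd0 : f.degree ≠ 0 := by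
    have := hf.natDegree_pos
    intro h
    simp [natDegree, h] at this
  obtain ⟨x, hx⟩ := hsp.exists_eval_eq_zero (by rwa [degree_map])
  rw [eval_map_algebraMap] at hx
  exact ⟨x, (minpoly.eq_of_irreducible_of_monic hf hx hm).symm⟩

lemma key_sum [DecidableEq Fq[X]] (n : ℕ) (hn : n ≠ 0) :
    ∑ d ∈ n.divisors, d * (Td Fq n d).card = (Fintype.card Fq) ^ n := by
  set I := ((Finset.univ : Finset (K Fq n)).image (minpoly Fq)) with hI
  have h1 := Finset.card_eq_sum_card_image (minpoly Fq) (Finset.univ : Finset (K Fq n))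
  have hfib : ∀ f ∈ I, (Finset.univ.filter (fun y : K Fq n => minpoly Fq y = f)).card
      = f.natDegree := by
    intro f hfI
    obtain ⟨x, -, rfl⟩ := Finset.mem_image.mp hfI
    have hint : IsIntegral Fq x := Algebra.IsIntegral.isIntegral x
    have hirr := minpoly.irreducible hint
    have hmon := minpoly.monic hint
    have hfd : minpoly Fq x ∣ gp Fq n :=
      dvd_gp_of_irreducible hirr hmon (minpoly_deg_dvd n hn x)
    have hsepf : (minpoly Fq x).Separable := (gp_sep n hn).of_dvd hfd
    have hsp : Splits ((minpoly Fq x).map (algebraMap Fq (K Fq n))) :=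
      (SplittingField.splits _).of_dvd (map_ne_zero (gp_ne_zero n hn)) (Polynomial.map_dvd _ hfd)
    have heq : Finset.univ.filter (fun y : K Fq n => minpoly Fq y = minpoly Fq x)
        = ((minpoly Fq x).rootSet (K Fq n)).toFinset := by
      ext y
      simp only [Finset.mem_filter, Finset.mem_univ, true_and, Set.mem_toFinset,
        mem_rootSet_of_ne hmon.ne_zero]
      constructor
      · intro h; rw [← h]; exact minpoly.aeval _ _
      · intro hy
        exact (minpoly.eq_of_irreducible_of_monic (p := minpoly Fq x) hirr hy hmon).symm
    rw [heq, Set.toFinset_card]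
    exact card_rootSet_eq_natDegree hsepf hsp
  have h2 : ∑ f ∈ I, f.natDegree = (Fintype.card Fq) ^ n := by
    rw [← card_K n hn, ← Finset.card_univ, h1]
    exact (Finset.sum_congr rfl hfib).symm
  have h3 : ∀ f ∈ I, f.natDegree ∈ n.divisors := by
    intro f hfI
    obtain ⟨x, -, rfl⟩ := Finset.mem_image.mp hfI
    exact Nat.mem_divisors.mpr ⟨minpoly_deg_dvd n hn x, hn⟩
  have h4 := Finset.sum_fiberwise_of_maps_to h3 (fun f => f.natDegree)
  rw [← h2, ← h4]
  refine Finset.sum_congr rfl fun d hd => ?_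
  have : ∀ f ∈ I.filter (fun f => f.natDegree = d), f.natDegree = d := by
    intro f hf; exact (Finset.mem_filter.mp hf).2
  rw [Finset.sum_congr rfl this, Finset.sum_const, smul_eq_mul, mul_comm]
  rfl

lemma piq_eq_Td [DecidableEq Fq[X]] (n d : ℕ) (hn : n ≠ 0) (hd : d ∣ n) :
    piq Fq d = (Td Fq n d).card := by
  have hset : {f : Fq[X] | f.Monic ∧ f.natDegree = d ∧ Irreducible f} = ↑(Td Fq n d) := by
    ext f
    simp only [Set.mem_setOf_eq, Td, Finset.coe_filter, Finset.mem_image, Finset.mem_univ,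
      true_and, Set.mem_setOf_eq]
    constructor
    · rintro ⟨hm, rfl, hirr⟩
      obtain ⟨x, hx⟩ := exists_root hn hirr hm hd
      exact ⟨⟨x, hx⟩, rfl⟩
    · rintro ⟨⟨x, rfl⟩, hdeg⟩
      have hint : IsIntegral Fq x := Algebra.IsIntegral.isIntegral x
      exact ⟨minpoly.monic hint, hdeg, minpoly.irreducible hint⟩
  show Nat.card {f : Fq[X] // f.Monic ∧ f.natDegree = d ∧ Irreducible f} = _
  rw [← Set.ncard_coe_finset, ← hset]
  exact Nat.card_coe_set_eq _

/-- The key identity: `∑_{d ∣ n} d · π_q(d) = q^n`. -/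
lemma sum_divisors_piq (Fq : Type) [Field Fq] [Fintype Fq] (n : ℕ) (hn : n ≠ 0) :
    ∑ d ∈ n.divisors, d * piq Fq d = (Fintype.card Fq) ^ n := by
  classical
  rw [Finset.sum_congr rfl
    (fun d hd => by rw [piq_eq_Td n d hn (Nat.mem_divisors.mp hd).1])]
  exact key_sum n hn

end PNTpoly

namespace PNTpoly

lemma upper_nat (Fq : Type) [Field Fq] [Fintype Fq] (n : ℕ) (hn : n ≠ 0) :
    n * piq Fq n ≤ (Fintype.card Fq) ^ n := by
  rw [← sum_divisors_piq Fq n hn]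
  exact Finset.single_le_sum (f := fun d => d * piq Fq d) (fun d _ => Nat.zero_le _)
    (Nat.mem_divisors_self n hn)

lemma geom_le (q m : ℕ) (hq : 2 ≤ q) : ∑ d ∈ Finset.range (m + 1), q ^ d ≤ 2 * q ^ m := by
  induction m with
  | zero => simpa using by omega
  | succ m ih =>
    rw [Finset.sum_range_succ]
    have h2 : 2 * q ^ m ≤ q ^ (m + 1) := by
      rw [pow_succ, mul_comm]
      exact Nat.mul_le_mul_left _ hq
    calc ∑ d ∈ Finset.range (m + 1), q ^ d + q ^ (m + 1)
        ≤ 2 * q ^ m + q ^ (m + 1) := Nat.add_le_add_right ih _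
      _ ≤ q ^ (m + 1) + q ^ (m + 1) := Nat.add_le_add_right h2 _
      _ = 2 * q ^ (m + 1) := by ring

lemma proper_subset_Icc (n : ℕ) (hn : n ≠ 0) :
    n.properDivisors ⊆ Finset.Icc 1 (n / 2) := by
  intro d hd
  obtain ⟨hdvd, hlt⟩ := Nat.mem_properDivisors.mp hd
  obtain ⟨k, rfl⟩ := hdvd
  rw [Finset.mem_Icc]
  have hd0 : d ≠ 0 := by rintro rfl; simp at hlt
  have hk2 : 2 ≤ k := by
    by_contra h
    interval_cases k <;> omega
  have h2d : d * 2 ≤ d * k := Nat.mul_le_mul_left d hk2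
  refine ⟨by omega, ?_⟩
  rw [Nat.le_div_iff_mul_le (by norm_num)]
  omega

lemma lower_nat (Fq : Type) [Field Fq] [Fintype Fq] (n : ℕ) (hn : n ≠ 0) :
    (Fintype.card Fq) ^ n ≤ n * piq Fq n + 2 * (Fintype.card Fq) ^ (n / 2) := by
  set q := Fintype.card Fq with hqdef
  have hq : 2 ≤ q := Fintype.one_lt_card
  have hterm : ∀ d ∈ n.properDivisors, d * piq Fq d ≤ q ^ d := by
    intro d hd
    have hd0 : d ≠ 0 := by
      rintro rfl
      obtain ⟨hdvd, hlt⟩ := Nat.mem_properDivisors.mp hd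
      exact hn (Nat.eq_zero_of_zero_dvd hdvd)
    calc d * piq Fq d ≤ ∑ e ∈ d.divisors, e * piq Fq e :=
          Finset.single_le_sum (f := fun e => e * piq Fq e) (fun e _ => Nat.zero_le _)
            (Nat.mem_divisors_self d hd0)
      _ = q ^ d := sum_divisors_piq Fq d hd0
  calc q ^ n = ∑ d ∈ n.divisors, d * piq Fq d := (sum_divisors_piq Fq n hn).symm
    _ = n * piq Fq n + ∑ d ∈ n.properDivisors, d * piq Fq d := by
        rw [← Nat.insert_self_properDivisors hn,
          Finset.sum_insert Nat.self_notMem_properDivisors]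
    _ ≤ n * piq Fq n + ∑ d ∈ n.properDivisors, q ^ d :=
        Nat.add_le_add_left (Finset.sum_le_sum hterm) _
    _ ≤ n * piq Fq n + ∑ d ∈ Finset.Icc 1 (n / 2), q ^ d :=
        Nat.add_le_add_left (Finset.sum_le_sum_of_subset (proper_subset_Icc n hn)) _
    _ ≤ n * piq Fq n + ∑ d ∈ Finset.range (n / 2 + 1), q ^ d := by
        refine Nat.add_le_add_left (Finset.sum_le_sum_of_subset ?_) _
        intro d hd
        rw [Finset.mem_Icc] at hd
        rw [Finset.mem_range]
        omega
    _ ≤ n * piq Fq n + 2 * q ^ (n / 2) := Nat.add_le_add_left (geom_le q (n / 2) hq) _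

end PNTpoly

/-- **Prime Number Theorem for polynomials.** For all `X ≥ 1`,
`q^X/X − 2 q^{X/2}/X ≤ π_q(X) ≤ q^X/X`. -/
theorem prime_number_theorem_poly (Fq : Type) [Field Fq] [Fintype Fq]
    (X : ℕ) (hX : 1 ≤ X) :
    (Fintype.card Fq : ℝ) ^ X / X - 2 * (Fintype.card Fq : ℝ) ^ ((X : ℝ) / 2) / X
        ≤ piq Fq X ∧
      (piq Fq X : ℝ) ≤ (Fintype.card Fq : ℝ) ^ X / X := by
  have hn0 : X ≠ 0 := by omega
  have hXpos : (0 : ℝ) < X := by exact_mod_cast Nat.pos_of_ne_zero hn0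
  have hq1 : (1 : ℝ) ≤ (Fintype.card Fq : ℝ) := by exact_mod_cast Fintype.card_pos
  constructor
  · have h1 : ((Fintype.card Fq : ℝ)) ^ X
        ≤ X * piq Fq X + 2 * (Fintype.card Fq : ℝ) ^ (X / 2 : ℕ) := by
      exact_mod_cast PNTpoly.lower_nat Fq X hn0
    have h2 : ((Fintype.card Fq : ℝ)) ^ (X / 2 : ℕ)
        ≤ (Fintype.card Fq : ℝ) ^ ((X : ℝ) / 2) := by
      rw [← Real.rpow_natCast (Fintype.card Fq : ℝ) (X / 2)]
      exact Real.rpow_le_rpow_of_exponent_le hq1 (Nat.cast_div_le)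
    rw [div_sub_div_same, div_le_iff₀ hXpos]
    have h3 : (X : ℝ) * piq Fq X = (piq Fq X : ℝ) * X := mul_comm _ _
    linarith
  · rw [le_div_iff₀ hXpos]
    have := PNTpoly.upper_nat Fq X hn0
    have h : (X : ℝ) * piq Fq X ≤ (Fintype.card Fq : ℝ) ^ X := by exact_mod_cast this
    linarith [mul_comm (X : ℝ) (piq Fq X : ℝ)]
end

section
/- Let P_A be the product of all monic irreducible polynomials ϖ ≠ T of degree at most A in F_q[T]. Then |P_A|/φ(P_A) < exp(Σ_{r=1}^{A} 1/r) ≤ exp(log A + γ + 1/(2A)), where γ is the Euler–Mascheroni constant. -/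
open Polynomial

lemma log_trap {x : ℝ} (hx : 0 ≤ x) : Real.log (1 + x) ≤ x * (2 + x) / (2 * (1 + x)) := by
  rcases eq_or_lt_of_le hx with h | h
  · simp [← h]
  · have h1 : (0:ℝ) < 1 + x := by linarith
    have hl : 0 < Real.log (1 + x) := Real.log_pos (by linarith)
    have hs := Real.self_lt_sinh_iff.mpr hl
    rw [Real.sinh_log h1] at hs
    have heq : ((1 + x) - (1 + x)⁻¹) / 2 = x * (2 + x) / (2 * (1 + x)) := by
      field_simp; ring
    linarith [heq ▸ hs.le]

lemma log_step (k : ℝ) (hk : 0 < k) :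
    Real.log (k + 1) - Real.log k ≤ 1 / (2 * k) + 1 / (2 * (k + 1)) := by
  have hlog : Real.log (1 + 1/k) ≤ (1/k) * (2 + 1/k) / (2 * (1 + 1/k)) :=
    log_trap (by positivity)
  have hb : (1/k) * (2 + 1/k) / (2 * (1 + 1/k)) = 1 / (2*k) + 1 / (2*(k+1)) := by
    field_simp; ring
  have hlogdiff : Real.log (k + 1) - Real.log k = Real.log (1 + 1/k) := by
    rw [← Real.log_div (by positivity) (by positivity)]
    congr 1
    field_simp
  rw [hlogdiff]
  linarith [hb ▸ hlog]

lemma harmonic_bound (A : ℕ) (hA : 1 ≤ A) :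
    (harmonic A : ℝ) ≤ Real.log A + Real.eulerMascheroniConstant + 1 / (2 * A) := by
  set u : ℕ → ℝ := fun n =>
    (harmonic (n + 1) : ℝ) - Real.log ((n : ℝ) + 1) - 1 / (2 * ((n : ℝ) + 1)) with hu
  have hmono : Monotone u := by
    apply monotone_nat_of_le_succ
    intro n
    have hk : (0:ℝ) < (n:ℝ) + 1 := by positivity
    have hstep := log_step ((n:ℝ) + 1) hk
    have hharm : (harmonic (n + 1 + 1) : ℝ) = (harmonic (n + 1) : ℝ) + 1 / ((n:ℝ) + 1 + 1) := by
      push_cast [harmonic_succ]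
      ring
    have hx : ((n:ℝ)+1+1) ≠ 0 := by positivity
    have e2 : (1:ℝ)/(2*((n:ℝ)+1+1)) = (1/((n:ℝ)+1+1))/2 := by field_simp
    simp only [hu]
    push_cast
    linarith
  have htend : Filter.Tendsto u Filter.atTop (nhds Real.eulerMascheroniConstant) := by
    have h1 : Filter.Tendsto (fun n : ℕ => (harmonic (n+1) : ℝ) - Real.log ((n:ℝ) + 1))
        Filter.atTop (nhds Real.eulerMascheroniConstant) := by
      have := Real.tendsto_harmonic_sub_log.comp (Filter.tendsto_add_atTop_nat 1)
      refine this.congr (fun n => ?_)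
      simp [Function.comp]
    have h2 : Filter.Tendsto (fun n : ℕ => 1 / (2 * ((n:ℝ) + 1))) Filter.atTop (nhds 0) := by
      have h := (tendsto_one_div_add_atTop_nhds_zero_nat (𝕜 := ℝ)).div_const 2
      rw [zero_div] at h
      refine h.congr (fun n => ?_)
      rw [div_div, mul_comm]
    have := h1.sub h2
    rw [sub_zero] at this
    exact this
  obtain ⟨n, rfl⟩ : ∃ n, A = n + 1 := ⟨A - 1, (Nat.succ_pred_eq_of_pos hA).symm⟩
  have := hmono.ge_of_tendsto htend n
  simp only [hu] at this
  push_cast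
  linarith

-- every monic irreducible f over Fq divides X^(q^deg f) - X
lemma irred_dvd_pow_sub (Fq : Type) [Field Fq] [Fintype Fq] (f : Polynomial Fq)
    (hm : f.Monic) (hi : Irreducible f) :
    f ∣ X ^ (Fintype.card Fq ^ f.natDegree) - X := by
  haveI := Fact.mk hi
  have hf0 : f ≠ 0 := hm.ne_zero
  let pb := AdjoinRoot.powerBasis hf0
  haveI : Fintype (AdjoinRoot f) := Module.fintypeOfFintype pb.basis
  have hcard : Fintype.card (AdjoinRoot f) = Fintype.card Fq ^ f.natDegree := by
    rw [Module.card_fintype pb.basis]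
    congr 1
    simp [pb, AdjoinRoot.powerBasis]
  have hroot : (AdjoinRoot.root f) ^ (Fintype.card Fq ^ f.natDegree) = AdjoinRoot.root f := by
    rw [← hcard]; exact FiniteField.pow_card _
  have h0 : (Polynomial.aeval (AdjoinRoot.root f))
      (X ^ (Fintype.card Fq ^ f.natDegree) - X : Polynomial Fq) = 0 := by
    simp [hroot]
  have hdvd := minpoly.dvd Fq (AdjoinRoot.root f) h0
  rwa [AdjoinRoot.minpoly_root hf0, hm.leadingCoeff, inv_one, map_one, mul_one] at hdvd

lemma card_bound (Fq : Type) [Field Fq] [Fintype Fq] (T : Finset (Polynomial Fq)) (r : ℕ)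
    (hr : 1 ≤ r)
    (hT : ∀ f ∈ T, f.Monic ∧ Irreducible f ∧ f ≠ X ∧ f.natDegree = r) :
    r * T.card + 1 ≤ Fintype.card Fq ^ r := by
  classical
  set q := Fintype.card Fq with hqdef
  have hq1 : 1 < q := Fintype.one_lt_card
  have hqr1 : 1 < q ^ r := one_lt_pow₀ hq1 (by omega)
  have hXnotT : (X : Polynomial Fq) ∉ T := fun h => ((hT X h).2.2.1) rfl
  -- each element of insert X T divides X^(q^r) - X
  have hdvd : ∀ f ∈ insert (X : Polynomial Fq) T, f ∣ X ^ q ^ r - X := by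
    intro f hf
    rcases Finset.mem_insert.mp hf with rfl | hf
    · exact dvd_sub (dvd_pow_self X (by omega)) dvd_rfl
    · obtain ⟨hm, hi, -, hdeg⟩ := hT f hf
      have := irred_dvd_pow_sub Fq f hm hi
      rwa [hdeg] at this
  -- pairwise coprime
  have hmonirr : ∀ f ∈ insert (X : Polynomial Fq) T, f.Monic ∧ Irreducible f := by
    intro f hf
    rcases Finset.mem_insert.mp hf with rfl | hf
    · exact ⟨monic_X, irreducible_X⟩
    · exact ⟨(hT f hf).1, (hT f hf).2.1⟩
  have hcop : (↑(insert (X : Polynomial Fq) T) : Set (Polynomial Fq)).Pairwise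
      (Function.onFun IsCoprime (id : Polynomial Fq → Polynomial Fq)) := by
    intro a ha b hb hab
    obtain ⟨ham, hai⟩ := hmonirr a ha
    obtain ⟨hbm, hbi⟩ := hmonirr b hb
    refine (hai.coprime_iff_not_dvd).mpr (fun hdvd => hab ?_)
    exact eq_of_monic_of_associated ham hbm (hai.associated_of_dvd hbi hdvd)
  have hproddvd : (∏ f ∈ insert (X : Polynomial Fq) T, f) ∣ X ^ q ^ r - X :=
    Finset.prod_dvd_of_coprime hcop hdvd
  -- degree computations
  have hdegpow : (X ^ q ^ r - X : Polynomial Fq).natDegree = q ^ r := by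
    rw [natDegree_sub_eq_left_of_natDegree_lt] <;> simp [hqr1]
  have hne : (X ^ q ^ r - X : Polynomial Fq) ≠ 0 := by
    intro h
    rw [h, natDegree_zero] at hdegpow
    omega
  have hdegprod : (∏ f ∈ insert (X : Polynomial Fq) T, f).natDegree = r * T.card + 1 := by
    rw [natDegree_prod _ _ (fun f hf => (hmonirr f hf).1.ne_zero)]
    rw [Finset.sum_insert hXnotT, natDegree_X]
    rw [Finset.sum_congr rfl (fun f hf => (hT f hf).2.2.2)]
    rw [Finset.sum_const, smul_eq_mul]
    ring
  have := Polynomial.natDegree_le_of_dvd hproddvd hne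
  rw [hdegprod, hdegpow] at this
  exact this


/-- Let `P_A` be the product of all monic irreducible polynomials `ϖ ≠ T` of degree
at most `A` (the set `S`), and let `D` be the set of monic irreducible divisors of
`P_A`, so that `φ(P_A) = |P_A|·∏_{ϖ ∈ D}(1 − 1/|ϖ|)` with `|m| = q^{deg m}`.
Then `|P_A|/φ(P_A) < exp(∑_{r=1}^A 1/r) ≤ exp(log A + γ + 1/(2A))`. -/
theorem totient_ratio_PA (Fq : Type) [Field Fq] [Fintype Fq]
    (A : ℕ) (hA : 1 ≤ A)
    (S : Finset (Polynomial Fq))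
    (hS : ∀ f : Polynomial Fq,
      f ∈ S ↔ f.Monic ∧ Irreducible f ∧ f ≠ Polynomial.X ∧ f.natDegree ≤ A)
    (D : Finset (Polynomial Fq))
    (hD : ∀ f : Polynomial Fq, f ∈ D ↔ f.Monic ∧ Irreducible f ∧ f ∣ (∏ g ∈ S, g)) :
    (Fintype.card Fq : ℝ) ^ (∏ g ∈ S, g).natDegree /
        ((Fintype.card Fq : ℝ) ^ (∏ g ∈ S, g).natDegree *
          ∏ f ∈ D, (1 - ((Fintype.card Fq : ℝ) ^ f.natDegree)⁻¹))
      < Real.exp (∑ r ∈ Finset.Icc 1 A, (1 : ℝ) / r) ∧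
    Real.exp (∑ r ∈ Finset.Icc 1 A, (1 : ℝ) / r)
      ≤ Real.exp (Real.log A + Real.eulerMascheroniConstant + 1 / (2 * A)) := by
  classical
  have hq1 : 1 < Fintype.card Fq := Fintype.one_lt_card
  have hQ1 : (1:ℝ) < (Fintype.card Fq : ℝ) := by exact_mod_cast hq1
  set Q : ℝ := (Fintype.card Fq : ℝ) with hQdef
  have hDS : D = S := by
    ext f
    rw [hD, hS]
    constructor
    · rintro ⟨hmon, hirr, hdvd⟩
      obtain ⟨g, hgS, hfg⟩ := hirr.prime.exists_mem_finset_dvd hdvd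
      obtain ⟨gm, girr, gne, gdeg⟩ := (hS g).mp hgS
      have hfg' : f = g := eq_of_monic_of_associated hmon gm (hirr.associated_of_dvd girr hfg)
      subst hfg'
      exact ⟨hmon, hirr, gne, gdeg⟩
    · rintro ⟨hmon, hirr, hne, hdeg⟩
      exact ⟨hmon, hirr, Finset.dvd_prod_of_mem _ ((hS f).mpr ⟨hmon, hirr, hne, hdeg⟩)⟩
  constructor
  · rw [hDS]
    have hdegmem : ∀ f ∈ S, f.natDegree ∈ Finset.Icc 1 A := by
      intro f hf
      obtain ⟨hm, hi, hne, hdeg⟩ := (hS f).mp hf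
      exact Finset.mem_Icc.mpr ⟨hi.natDegree_pos, hdeg⟩
    have hfac : ∀ f ∈ S, 0 < 1 - (Q ^ f.natDegree)⁻¹ := by
      intro f hf
      have hd := Finset.mem_Icc.mp (hdegmem f hf)
      have h1 : (1:ℝ) < Q ^ f.natDegree := one_lt_pow₀ hQ1 (by omega)
      have h2 : (Q ^ f.natDegree)⁻¹ < 1 := inv_lt_one_of_one_lt₀ h1
      linarith
    have hP : 0 < ∏ f ∈ S, (1 - (Q ^ f.natDegree)⁻¹) := Finset.prod_pos hfac
    have hQN : (0:ℝ) < Q ^ (∏ g ∈ S, g).natDegree := by positivity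
    rw [div_mul_eq_div_div, div_self hQN.ne', one_div]
    -- general facts about each fiber
    have hTmem : ∀ r : ℕ, ∀ f ∈ S.filter (fun f => f.natDegree = r),
        f.Monic ∧ Irreducible f ∧ f ≠ X ∧ f.natDegree = r := by
      intro r f hf
      obtain ⟨hfS, hdeg⟩ := Finset.mem_filter.mp hf
      obtain ⟨hm, hi, hne, -⟩ := (hS f).mp hfS
      exact ⟨hm, hi, hne, hdeg⟩
    have hfiber : ∀ r : ℕ,
        ∑ f ∈ S.filter (fun f => f.natDegree = r), -Real.log (1 - (Q ^ f.natDegree)⁻¹)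
          = ((S.filter (fun f => f.natDegree = r)).card : ℝ) * (-Real.log (1 - (Q ^ r)⁻¹)) := by
      intro r
      rw [Finset.sum_congr rfl (fun f hf => by
        rw [(Finset.mem_filter.mp hf).2])]
      rw [Finset.sum_const, nsmul_eq_mul]
    have hkey : ∀ r : ℕ, 1 ≤ r →
        (r : ℝ) * ((S.filter (fun f => f.natDegree = r)).card : ℝ) + 1 ≤ Q ^ r := by
      intro r hr
      have := card_bound Fq (S.filter (fun f => f.natDegree = r)) r hr (hTmem r)
      have h2 : ((r * (S.filter (fun f => f.natDegree = r)).card + 1 : ℕ) : ℝ)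
          ≤ ((Fintype.card Fq ^ r : ℕ) : ℝ) := by exact_mod_cast this
      push_cast at h2
      exact h2
    have hQr : ∀ r : ℕ, 1 ≤ r → (1:ℝ) < Q ^ r := fun r hr => one_lt_pow₀ hQ1 (by omega)
    have hloginv : ∀ r : ℕ, 1 ≤ r → (1 - (Q ^ r)⁻¹)⁻¹ = 1 + (Q ^ r - 1)⁻¹ := by
      intro r hr
      have h1 := hQr r hr
      have h2 : Q ^ r ≠ 0 := by positivity
      have h3 : Q ^ r - 1 ≠ 0 := by linarith [h1]
      field_simp
      ring
    have hlog : Real.log (∏ f ∈ S, (1 - (Q ^ f.natDegree)⁻¹))⁻¹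
        < ∑ r ∈ Finset.Icc 1 A, (1:ℝ)/r := by
      rw [Real.log_inv, Real.log_prod (fun f hf => (hfac f hf).ne'),
        ← Finset.sum_neg_distrib,
        ← Finset.sum_fiberwise_of_maps_to hdegmem (fun f => -Real.log (1 - (Q ^ f.natDegree)⁻¹))]
      apply Finset.sum_lt_sum
      · intro r hr
        obtain ⟨hr1, hrA⟩ := Finset.mem_Icc.mp hr
        rw [hfiber r]
        set n : ℝ := ((S.filter (fun f => f.natDegree = r)).card : ℝ) with hn
        have hn0 : 0 ≤ n := Nat.cast_nonneg _
        have h1 := hQr r hr1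
        have hinvpos : (0:ℝ) < (Q ^ r - 1)⁻¹ := inv_pos.mpr (by linarith)
        have hlb : -Real.log (1 - (Q ^ r)⁻¹) ≤ (Q ^ r - 1)⁻¹ := by
          rw [← Real.log_inv, hloginv r hr1]
          have := Real.log_le_sub_one_of_pos (x := 1 + (Q ^ r - 1)⁻¹) (by linarith)
          linarith
        have hkr := hkey r hr1
        rw [← hn] at hkr
        have hr0 : (0:ℝ) < r := by exact_mod_cast hr1
        have h2 : n * (Q ^ r - 1)⁻¹ ≤ 1 / r := by
          rw [← div_eq_mul_inv, div_le_div_iff₀ (by linarith) hr0]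
          nlinarith
        calc n * (-Real.log (1 - (Q ^ r)⁻¹)) ≤ n * (Q ^ r - 1)⁻¹ :=
              mul_le_mul_of_nonneg_left hlb hn0
          _ ≤ 1 / r := h2
      · refine ⟨1, Finset.mem_Icc.mpr ⟨le_refl 1, hA⟩, ?_⟩
        rw [hfiber 1]
        set n : ℝ := ((S.filter (fun f => f.natDegree = 1)).card : ℝ) with hn
        have hmem : (X - C 1 : Polynomial Fq) ∈ S.filter (fun f => f.natDegree = 1) := by
          refine Finset.mem_filter.mpr ⟨(hS _).mpr ⟨monic_X_sub_C 1, irreducible_X_sub_C 1, ?_, ?_⟩,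
            natDegree_X_sub_C 1⟩
          · intro h
            have h2 : (C 1 : Polynomial Fq) = 0 := sub_eq_self.mp h
            exact one_ne_zero (Polynomial.C_eq_zero.mp h2)
          · rw [natDegree_X_sub_C]; exact hA
        have hn1 : (1:ℝ) ≤ n := by
          have : 1 ≤ (S.filter (fun f => f.natDegree = 1)).card :=
            Finset.card_pos.mpr ⟨_, hmem⟩
          rw [hn]
          exact_mod_cast this
        have h1 := hQr 1 le_rfl
        have hinvpos : (0:ℝ) < (Q ^ 1 - 1)⁻¹ := inv_pos.mpr (by linarith)
        have hlb : -Real.log (1 - (Q ^ 1)⁻¹) < (Q ^ 1 - 1)⁻¹ := by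
          rw [← Real.log_inv, hloginv 1 le_rfl]
          have hne1 : (1:ℝ) + (Q ^ 1 - 1)⁻¹ ≠ 1 := by linarith
          have := Real.log_lt_sub_one_of_pos (x := 1 + (Q ^ 1 - 1)⁻¹) (by linarith) hne1
          linarith
        have hkr := hkey 1 le_rfl
        rw [← hn] at hkr
        norm_num at hkr
        have h2 : n * (Q ^ 1 - 1)⁻¹ ≤ 1 := by
          rw [← div_eq_mul_inv, div_le_one (by linarith)]
          nlinarith
        calc n * (-Real.log (1 - (Q ^ 1)⁻¹)) < n * (Q ^ 1 - 1)⁻¹ :=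
              (mul_lt_mul_iff_right₀ (by linarith)).mpr hlb
          _ ≤ 1 := h2
          _ = 1 / (1:ℕ) := by norm_num
    calc (∏ f ∈ S, (1 - (Q ^ f.natDegree)⁻¹))⁻¹
        = Real.exp (Real.log (∏ f ∈ S, (1 - (Q ^ f.natDegree)⁻¹))⁻¹) :=
          (Real.exp_log (by positivity)).symm
      _ < Real.exp (∑ r ∈ Finset.Icc 1 A, (1:ℝ)/r) := Real.exp_lt_exp.mpr hlog
  · apply Real.exp_le_exp.mpr
    have hsum : ∑ r ∈ Finset.Icc 1 A, (1:ℝ)/r = (harmonic A : ℝ) := by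
      rw [harmonic_eq_sum_Icc]
      push_cast
      simp [one_div]
    rw [hsum]
    exact harmonic_bound A hA
end

section
/- For every nonzero squarefree polynomial m ∈ F_q[T] coprime to T with deg m ≤ q, one has |m|/φ(m) < e; and for every nonzero squarefree m coprime to T with deg m > q, one has |m|/φ(m) ≤ e^γ·(log_q(deg m) + 1). -/
open Polynomial

noncomputable def cQ (Q : ℝ) (d : ℕ) : ℝ := -Real.log (1 - (Q ^ d)⁻¹)

lemma aux_neg_log_one_sub (x : ℝ) (h0 : 0 < x) (h1 : x < 1) :
    -Real.log (1 - x) ≤ x * (2 - x) / (2 * (1 - x)) := by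
  have hx : 0 < 1 - x := by linarith
  have ht : (1:ℝ) < (1 - x)⁻¹ := (one_lt_inv_iff₀).mpr ⟨hx, by linarith⟩
  have hlogpos : 0 < Real.log (1 - x)⁻¹ := Real.log_pos ht
  have hsinh : Real.log (1 - x)⁻¹ ≤ Real.sinh (Real.log (1 - x)⁻¹) :=
    (Real.self_lt_sinh_iff.mpr hlogpos).le
  rw [Real.sinh_log (by positivity)] at hsinh
  rw [show -Real.log (1 - x) = Real.log (1 - x)⁻¹ from (Real.log_inv _).symm]
  refine hsinh.trans (le_of_eq ?_)
  rw [inv_inv]; field_simp; ring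

lemma aux_neg_log_one_sub' (x : ℝ) (h0 : 0 < x) (h1 : x ≤ 1/2) :
    -Real.log (1 - x) ≤ x * (1 + x) := by
  refine (aux_neg_log_one_sub x h0 (by linarith)).trans ?_
  rw [div_le_iff₀ (by linarith)]
  nlinarith [sq_nonneg x, h0.le]

section
variable {Q : ℝ} (hQ : 2 ≤ Q)
include hQ

lemma Qpow_ge (d : ℕ) (hd : 1 ≤ d) : 2 ≤ Q ^ d :=
  calc (2:ℝ) = 2 ^ 1 := (pow_one 2).symm
  _ ≤ Q ^ 1 := by simpa using hQ
  _ ≤ Q ^ d := pow_le_pow_right₀ (by linarith) hd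

lemma Qpow_inv_mem (d : ℕ) (hd : 1 ≤ d) :
    0 < (Q ^ d)⁻¹ ∧ (Q ^ d)⁻¹ ≤ 1/2 := by
  have h2 := Qpow_ge hQ d hd
  constructor
  · positivity
  · rw [inv_le_comm₀ (by linarith) (by norm_num)]; linarith

lemma cQ_pos (d : ℕ) (hd : 1 ≤ d) : 0 < cQ Q d := by
  obtain ⟨h0, h1⟩ := Qpow_inv_mem hQ d hd
  have : Real.log (1 - (Q ^ d)⁻¹) < 0 :=
    Real.log_neg (by linarith) (by linarith)
  simp only [cQ]; linarith

lemma cQ_anti {d e : ℕ} (hd : 1 ≤ d) (hde : d ≤ e) : cQ Q e ≤ cQ Q d := by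
  obtain ⟨hd0, hd1⟩ := Qpow_inv_mem hQ d hd
  obtain ⟨he0, he1⟩ := Qpow_inv_mem hQ e (hd.trans hde)
  have hpow : Q ^ d ≤ Q ^ e := pow_le_pow_right₀ (by linarith) hde
  have hinv : (Q ^ e)⁻¹ ≤ (Q ^ d)⁻¹ := by
    exact inv_anti₀ (inv_pos.mp hd0) hpow
  simp only [cQ, neg_le_neg_iff]
  apply Real.log_le_log (by linarith)
  linarith

lemma cQ_le (d : ℕ) (hd : 1 ≤ d) :
    cQ Q d ≤ (Q ^ d)⁻¹ * (1 + (Q ^ d)⁻¹) := by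
  obtain ⟨h0, h1⟩ := Qpow_inv_mem hQ d hd
  simpa [cQ, mul_add, mul_comm] using aux_neg_log_one_sub' _ h0 h1

end

lemma harmonic_sum_le (k : ℕ) :
    ∑ d ∈ Finset.Icc 1 k, (1:ℝ)/d ≤ Real.eulerMascheroniConstant + Real.log (k+1) := by
  have hs : ∑ d ∈ Finset.Icc 1 k, (1:ℝ)/d = (harmonic k : ℝ) := by
    rw [harmonic, show Finset.Icc 1 k = Finset.Ico 1 (k+1) from (Finset.Ico_add_one_right_eq_Icc 1 k).symm,
      Finset.sum_Ico_eq_sum_range]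
    push_cast
    simp [one_div, add_comm]
  rw [hs]
  have := Real.eulerMascheroniSeq_lt_eulerMascheroniConstant k
  rw [Real.eulerMascheroniSeq] at this
  push_cast at this ⊢
  linarith

lemma one_le_gamma_add_log_two :
    (1:ℝ) ≤ Real.eulerMascheroniConstant + Real.log 2 := by
  have h1 : (1:ℝ)/2 < Real.eulerMascheroniConstant := Real.one_half_lt_eulerMascheroniConstant
  have h2 : (1:ℝ)/2 ≤ Real.log 2 := by
    rw [Real.le_log_iff_exp_le (by norm_num)]
    have he : Real.exp (1/2) * Real.exp (1/2) = Real.exp 1 := by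
      rw [← Real.exp_add]; norm_num
    have := Real.exp_one_lt_d9
    nlinarith [Real.exp_pos (1/2 : ℝ)]
  linarith

section
variable {Q : ℝ} (hQ : 2 ≤ Q)

lemma Icc_one_split (k : ℕ) (hk : 1 ≤ k) :
    Finset.Icc 1 k = insert 1 (Finset.Icc 2 k) := by
  ext a; simp only [Finset.mem_Icc, Finset.mem_insert]; omega

include hQ

lemma geom_tail_le (k : ℕ) :
    ∑ d ∈ Finset.Icc 2 k, (Q ^ d)⁻¹ ≤ 2 * (Q ^ 2)⁻¹ := by
  have hQ0 : 0 < Q := by linarith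
  have hinv : (Q)⁻¹ < 1 := by
    rw [inv_lt_one_iff₀]; right; linarith
  have hinv0 : 0 ≤ (Q)⁻¹ := by positivity
  have h1 : ∑ d ∈ Finset.Icc 2 k, (Q ^ d)⁻¹ = ∑ d ∈ Finset.Ico 2 (k+1), (Q⁻¹) ^ d := by
    rw [← Finset.Ico_add_one_right_eq_Icc]
    exact Finset.sum_congr rfl fun d _ => (inv_pow Q d).symm
  rw [h1]
  refine (geom_sum_Ico_le_of_lt_one hinv0 hinv).trans ?_
  rw [div_le_iff₀ (by linarith)]
  have h2 : (Q⁻¹) ^ 2 = (Q ^ 2)⁻¹ := inv_pow Q 2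
  have h3 : (Q ^ 2)⁻¹ > 0 := by positivity
  have h4 : Q⁻¹ ≤ 1/2 := by
    rw [inv_le_comm₀ hQ0 (by norm_num)]; linarith
  nlinarith

lemma head_le (k : ℕ) (hk : 1 ≤ k) :
    (Q - 1) * cQ Q 1 + ∑ d ∈ Finset.Icc 2 k, (Q ^ d / d) * cQ Q d
      ≤ ∑ d ∈ Finset.Icc 1 k, (1:ℝ)/d := by
  have hQ0 : 0 < Q := by linarith
  have hc1 : (Q - 1) * cQ Q 1 ≤ 1 - (Q ^ 2)⁻¹ := by
    have h := cQ_le hQ 1 le_rfl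
    have h2 : (Q - 1) * cQ Q 1 ≤ (Q - 1) * ((Q ^ 1)⁻¹ * (1 + (Q ^ 1)⁻¹)) := by
      apply mul_le_mul_of_nonneg_left h (by linarith)
    refine h2.trans (le_of_eq ?_)
    field_simp
    ring
  have hterm : ∀ d ∈ Finset.Icc 2 k, (Q ^ d / d) * cQ Q d ≤ 1/d + (Q ^ d)⁻¹ / 2 := by
    intro d hd
    simp only [Finset.mem_Icc] at hd
    have hd1 : 1 ≤ d := by omega
    have hQd : 2 ≤ Q ^ d := Qpow_ge hQ d hd1
    have h := cQ_le hQ d hd1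
    have hdR : (2:ℝ) ≤ (d:ℝ) := by exact_mod_cast hd.1
    have h2 : (Q ^ d / d) * cQ Q d ≤ (Q ^ d / d) * ((Q ^ d)⁻¹ * (1 + (Q ^ d)⁻¹)) := by
      apply mul_le_mul_of_nonneg_left h (by positivity)
    refine h2.trans ?_
    have he : (Q ^ d / d) * ((Q ^ d)⁻¹ * (1 + (Q ^ d)⁻¹)) = 1/d + (Q ^ d)⁻¹/d := by
      field_simp
    rw [he]
    have : (Q ^ d)⁻¹ / d ≤ (Q ^ d)⁻¹ / 2 := by
      apply div_le_div_of_nonneg_left (by positivity) (by norm_num) hdR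
    linarith
  have hsum : ∑ d ∈ Finset.Icc 2 k, (Q ^ d / d) * cQ Q d
      ≤ ∑ d ∈ Finset.Icc 2 k, ((1:ℝ)/d + (Q ^ d)⁻¹ / 2) := Finset.sum_le_sum hterm
  rw [Finset.sum_add_distrib] at hsum
  have hgeo : ∑ d ∈ Finset.Icc 2 k, (Q ^ d)⁻¹ / 2 ≤ (Q ^ 2)⁻¹ := by
    rw [← Finset.sum_div]
    have := geom_tail_le hQ (Q := Q) k
    linarith
  rw [Icc_one_split k hk, Finset.sum_insert (by simp)]
  push_cast
  linarith

end

noncomputable def lamQ (Q : ℝ) (k : ℕ) : ℝ := cQ Q (k+1) / ((k:ℝ)+1)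

noncomputable def GQ (Q : ℝ) (k : ℕ) (x : ℝ) : ℝ :=
  lamQ Q k * x + (Q - 1) * (cQ Q 1 - lamQ Q k)
    + ∑ d ∈ Finset.Icc 2 k, (Q ^ d / d) * (cQ Q d - lamQ Q k * d)

lemma GQ_eq (Q : ℝ) (k : ℕ) (x : ℝ) :
    GQ Q k x = ((Q - 1) * cQ Q 1 + ∑ d ∈ Finset.Icc 2 k, (Q ^ d / d) * cQ Q d)
      + lamQ Q k * (x - ((Q - 1) + ∑ d ∈ Finset.Icc 2 k, Q ^ d)) := by
  have hsum : ∑ d ∈ Finset.Icc 2 k, (Q ^ d / d) * (cQ Q d - lamQ Q k * d)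
      = ∑ d ∈ Finset.Icc 2 k, ((Q ^ d / d) * cQ Q d - lamQ Q k * Q ^ d) := by
    refine Finset.sum_congr rfl fun d hd => ?_
    simp only [Finset.mem_Icc] at hd
    have hd0 : (d:ℝ) ≠ 0 := by
      have : 2 ≤ d := hd.1
      positivity
    field_simp
  rw [GQ, hsum, Finset.sum_sub_distrib, ← Finset.mul_sum]
  ring

section
variable {Q : ℝ} (hQ : 2 ≤ Q)
include hQ

lemma lamQ_nonneg (k : ℕ) : 0 ≤ lamQ Q k := by
  have := cQ_pos hQ (k+1) (by omega)
  have : (0:ℝ) < (k:ℝ)+1 := by positivity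
  apply div_nonneg (le_of_lt (cQ_pos hQ (k+1) (by omega))) (by positivity)

lemma c1_bound : (Q - 1) * cQ Q 1 ≤ 1 - (Q ^ 2)⁻¹ := by
  have hQ0 : 0 < Q := by linarith
  have h := cQ_le hQ 1 le_rfl
  have h2 : (Q - 1) * cQ Q 1 ≤ (Q - 1) * ((Q ^ 1)⁻¹ * (1 + (Q ^ 1)⁻¹)) :=
    mul_le_mul_of_nonneg_left h (by linarith)
  refine h2.trans (le_of_eq ?_)
  field_simp
  ring

lemma c2_half_bound : cQ Q 2 / 2 ≤ (Q ^ 2)⁻¹ := by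
  have h := cQ_le hQ 2 (by norm_num)
  obtain ⟨h0, h1⟩ := Qpow_inv_mem hQ 2 (by norm_num)
  nlinarith

lemma GQ_left (k : ℕ) (hk : 1 ≤ k) :
    GQ Q k (Q ^ k) ≤ Real.eulerMascheroniConstant + Real.log ((k:ℝ)+1) := by
  have hQ0 : 0 < Q := by linarith
  rw [GQ_eq]
  rcases eq_or_lt_of_le hk with h1 | h2
  · -- k = 1
    have hk1 : k = 1 := h1.symm
    subst hk1
    rw [show Finset.Icc 2 1 = (∅ : Finset ℕ) from Finset.Icc_eq_empty (by omega)]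
    simp only [Finset.sum_empty, add_zero]
    have hlam : lamQ Q 1 = cQ Q 2 / 2 := by
      rw [lamQ]; norm_num
    have hc1 := c1_bound hQ
    have hc2 := c2_half_bound hQ
    have h1g := one_le_gamma_add_log_two
    have hexpr : (Q - 1) * cQ Q 1 + lamQ Q 1 * (Q ^ 1 - (Q - 1 + 0)) ≤ 1 := by
      rw [hlam]
      have : (Q:ℝ) ^ 1 - (Q - 1 + 0) = 1 := by ring
      rw [this, mul_one]
      linarith
    have : Real.log ((1:ℕ):ℝ) = Real.log 1 := by norm_num
    have hfin : (1:ℝ) ≤ Real.eulerMascheroniConstant + Real.log (((1:ℕ):ℝ)+1) := by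
      push_cast
      calc (1:ℝ) ≤ Real.eulerMascheroniConstant + Real.log 2 := h1g
      _ = Real.eulerMascheroniConstant + Real.log (1+1) := by norm_num
    linarith
  · -- k ≥ 2
    have hk2 : 2 ≤ k := h2
    have hM : Q ^ k ≤ (Q - 1) + ∑ d ∈ Finset.Icc 2 k, Q ^ d := by
      have hmem : k ∈ Finset.Icc 2 k := by simp [Finset.mem_Icc]; omega
      have := Finset.single_le_sum (f := fun d => Q ^ d)
        (fun d _ => by positivity) hmem
      linarith
    have hlam := lamQ_nonneg hQ (Q := Q) k
    have hterm : lamQ Q k * (Q ^ k - ((Q - 1) + ∑ d ∈ Finset.Icc 2 k, Q ^ d)) ≤ 0 :=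
      mul_nonpos_of_nonneg_of_nonpos hlam (by linarith)
    have hhead := head_le hQ k hk
    have hharm := harmonic_sum_le k
    linarith

lemma GQ_right (k : ℕ) (hk : 1 ≤ k) :
    GQ Q k (Q ^ (k+1)) ≤ Real.eulerMascheroniConstant + Real.log ((k:ℝ)+2) := by
  have hQ0 : 0 < Q := by linarith
  rw [GQ_eq]
  have hMpos : 0 ≤ (Q - 1) + ∑ d ∈ Finset.Icc 2 k, Q ^ d := by
    have : 0 ≤ ∑ d ∈ Finset.Icc 2 k, Q ^ d :=
      Finset.sum_nonneg fun d _ => by positivity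
    linarith
  have hlam := lamQ_nonneg hQ (Q := Q) k
  have hstep : lamQ Q k * (Q ^ (k+1) - ((Q - 1) + ∑ d ∈ Finset.Icc 2 k, Q ^ d))
      ≤ (Q ^ (k+1) / ((k:ℝ)+1)) * cQ Q (k+1) := by
    have h1 : lamQ Q k * (Q ^ (k+1) - ((Q - 1) + ∑ d ∈ Finset.Icc 2 k, Q ^ d))
        ≤ lamQ Q k * Q ^ (k+1) := by
      apply mul_le_mul_of_nonneg_left _ hlam
      linarith
    refine h1.trans (le_of_eq ?_)
    rw [lamQ]
    ring
  have hhead2 : ((Q - 1) * cQ Q 1 + ∑ d ∈ Finset.Icc 2 k, (Q ^ d / d) * cQ Q d)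
      + (Q ^ (k+1) / ((k:ℝ)+1)) * cQ Q (k+1)
      ≤ ∑ d ∈ Finset.Icc 1 (k+1), (1:ℝ)/d := by
    have := head_le hQ (k+1) (by omega)
    rw [Finset.sum_Icc_succ_top (by omega : 2 ≤ k + 1)] at this
    push_cast at this
    linarith
  have hharm := harmonic_sum_le (k+1)
  push_cast at hharm
  have hc : ((k:ℝ)+1+1) = (k:ℝ)+2 := by ring
  rw [hc] at hharm
  linarith

end

lemma GQ_affine (Q : ℝ) (k : ℕ) (a b x y : ℝ) (hab : a + b = 1) :
    GQ Q k (a*x + b*y) = a * GQ Q k x + b * GQ Q k y := by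
  have hb : b = 1 - a := by linarith
  subst hb
  simp only [GQ]
  ring

lemma log_concave2 (a b x y : ℝ) (ha : 0 ≤ a) (hb : 0 ≤ b) (hab : a + b = 1)
    (hx : 0 < x) (hy : 0 < y) :
    a * Real.log x + b * Real.log y ≤ Real.log (a*x + b*y) := by
  have h := Real.geom_mean_le_arith_mean2_weighted ha hb hx.le hy.le hab
  have hx' : (0:ℝ) < x ^ a := Real.rpow_pos_of_pos hx a
  have hy' : (0:ℝ) < y ^ b := Real.rpow_pos_of_pos hy b
  calc a * Real.log x + b * Real.log y = Real.log (x ^ a * y ^ b) := by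
        rw [Real.log_mul (ne_of_gt hx') (ne_of_gt hy'), Real.log_rpow hx, Real.log_rpow hy]
  _ ≤ Real.log (a*x + b*y) := Real.log_le_log (by positivity) h

open Polynomial in
lemma irred_dvd_aux (Fq : Type) [Field Fq] [Fintype Fq] (f : Polynomial Fq)
    (hmon : f.Monic) (hirr : Irreducible f) :
    f ∣ X ^ (Fintype.card Fq ^ f.natDegree) - X := by
  haveI := Fact.mk hirr
  have hf0 : f ≠ 0 := hirr.ne_zero
  set K := AdjoinRoot f
  haveI : Fintype K := Module.fintypeOfFintype (AdjoinRoot.powerBasis hf0).basis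
  have hcard : Fintype.card K = Fintype.card Fq ^ f.natDegree := by
    rw [Module.card_eq_pow_finrank (K := Fq) (V := K), (AdjoinRoot.powerBasis hf0).finrank,
      AdjoinRoot.powerBasis_dim]
  set α : K := AdjoinRoot.root f
  have hroot : (Polynomial.aeval α) f = 0 := by
    rw [AdjoinRoot.aeval_eq, AdjoinRoot.mk_self]
  have hmin : minpoly Fq α = f :=
    (minpoly.eq_of_irreducible_of_monic hirr hroot hmon).symm
  have : (Polynomial.aeval α) ((X : Polynomial Fq) ^ (Fintype.card Fq ^ f.natDegree) - X) = 0 := by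
    rw [map_sub, map_pow, Polynomial.aeval_X, ← hcard, FiniteField.pow_card, sub_self]
  have hdvd := minpoly.dvd Fq α this
  rwa [hmin] at hdvd

open Polynomial in
lemma monic_irred_coprime {Fq : Type} [Field Fq] {f g : Polynomial Fq}
    (hfm : f.Monic) (hfi : Irreducible f) (hgm : g.Monic) (hgi : Irreducible g)
    (hne : f ≠ g) : IsCoprime f g := by
  rw [hfi.coprime_iff_not_dvd]
  intro hdvd
  exact hne (Polynomial.eq_of_monic_of_associated hfm hgm
    (hfi.associated_of_dvd hgi hdvd))

open Polynomial in
lemma card_degree_bound (Fq : Type) [Field Fq] [Fintype Fq]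
    (s : Finset (Polynomial Fq)) (d : ℕ) (hd : 1 ≤ d)
    (hs : ∀ f ∈ s, f.Monic ∧ Irreducible f ∧ f.natDegree = d) :
    s.card * d ≤ Fintype.card Fq ^ d := by
  classical
  have hq1 : 1 < Fintype.card Fq := Fintype.one_lt_card
  have hN : 1 < Fintype.card Fq ^ d := Nat.one_lt_pow (by omega) hq1
  set W : Polynomial Fq := X ^ (Fintype.card Fq ^ d) - X with hW
  have hWdeg : W.natDegree = Fintype.card Fq ^ d := by
    rw [hW, Polynomial.natDegree_sub_eq_left_of_natDegree_lt, Polynomial.natDegree_X_pow]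
    rw [Polynomial.natDegree_X_pow, Polynomial.natDegree_X]
    omega
  have hW0 : W ≠ 0 := by
    intro h
    rw [h, Polynomial.natDegree_zero] at hWdeg
    omega
  have hpair : (↑s : Set (Polynomial Fq)).Pairwise (Function.onFun IsCoprime (id : Polynomial Fq → Polynomial Fq)) := by
    intro f hf g hg hne
    obtain ⟨hfm, hfi, _⟩ := hs f hf
    obtain ⟨hgm, hgi, _⟩ := hs g hg
    exact monic_irred_coprime hfm hfi hgm hgi hne
  have hdvd : (∏ f ∈ s, f) ∣ W := by
    refine Finset.prod_dvd_of_coprime hpair fun f hf => ?_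
    obtain ⟨hfm, hfi, hfd⟩ := hs f hf
    have := irred_dvd_aux Fq f hfm hfi
    rwa [hfd] at this
  have hdeg : (∏ f ∈ s, f).natDegree = s.card * d := by
    rw [Polynomial.natDegree_prod _ _ (fun f hf => (hs f hf).2.1.ne_zero)]
    rw [Finset.sum_congr rfl (fun f hf => (hs f hf).2.2), Finset.sum_const, smul_eq_mul]
  have := Polynomial.natDegree_le_of_dvd hdvd hW0
  omega

open Polynomial in
lemma card_linear_bound (Fq : Type) [Field Fq] [Fintype Fq]
    (m : Polynomial Fq) (hT : IsCoprime m X)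
    (s : Finset (Polynomial Fq))
    (hs : ∀ f ∈ s, f.Monic ∧ f ∣ m ∧ f.natDegree = 1) :
    s.card + 1 ≤ Fintype.card Fq := by
  classical
  have hform : ∀ f ∈ s, f = X + C (f.coeff 0) := by
    intro f hf
    obtain ⟨hfm, _, hfd⟩ := hs f hf
    have h1 : f = C (f.coeff 1) * X + C (f.coeff 0) :=
      Polynomial.eq_X_add_C_of_natDegree_le_one (by omega)
    have hc1 : f.coeff 1 = 1 := by
      have := hfm.coeff_natDegree
      rwa [hfd] at this
    rw [hc1] at h1
    simpa using h1
  have h0 : ∀ f ∈ s, f.coeff 0 ≠ 0 := by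
    intro f hf hc
    have hX : f = X := by rw [hform f hf, hc]; simp
    have hdvd : X ∣ m := hX ▸ (hs f hf).2.1
    exact Polynomial.not_isUnit_X (hT.isUnit_of_dvd' hdvd dvd_rfl)
  have hinj : Set.InjOn (fun f : Polynomial Fq => f.coeff 0) (↑s : Set (Polynomial Fq)) := by
    intro f hf g hg h
    rw [hform f hf, hform g hg]
    simp only at h
    rw [h]
  have hmaps : ∀ f ∈ s, f.coeff 0 ∈ Finset.univ.erase (0 : Fq) := by
    intro f hf
    exact Finset.mem_erase.mpr ⟨h0 f hf, Finset.mem_univ _⟩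
  have hcard := Finset.card_le_card_of_injOn _ hmaps hinj
  rw [Finset.card_erase_of_mem (Finset.mem_univ _), Finset.card_univ] at hcard
  have hq1 : 1 ≤ Fintype.card Fq := Fintype.card_pos
  omega

set_option maxHeartbeats 2000000 in
open Polynomial in
/-- **Totient ratio bound (Lemma 4 of the paper).** For nonzero squarefree
`m ∈ F_q[T]` coprime to `T` (here `T` is `Polynomial.X`), with `D` the finite set
of monic irreducible divisors of `m`, `|m| = q^{deg m}` and
`φ(m) = |m|·∏_{ϖ ∈ D}(1 − 1/|ϖ|)`:
if `deg m ≤ q` then `|m|/φ(m) < e`, and if `deg m > q` then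
`|m|/φ(m) ≤ e^γ·(log_q(deg m) + 1)`. -/
theorem totient_ratio_bound (Fq : Type) [Field Fq] [Fintype Fq]
    (m : Polynomial Fq) (hm : m ≠ 0) (hsq : Squarefree m)
    (hT : IsCoprime m Polynomial.X)
    (D : Finset (Polynomial Fq))
    (hD : ∀ f : Polynomial Fq, f ∈ D ↔ f.Monic ∧ Irreducible f ∧ f ∣ m) :
    (m.natDegree ≤ Fintype.card Fq →
      (Fintype.card Fq : ℝ) ^ m.natDegree /
          ((Fintype.card Fq : ℝ) ^ m.natDegree *
            ∏ f ∈ D, (1 - ((Fintype.card Fq : ℝ) ^ f.natDegree)⁻¹))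
        < Real.exp 1) ∧
    (Fintype.card Fq < m.natDegree →
      (Fintype.card Fq : ℝ) ^ m.natDegree /
          ((Fintype.card Fq : ℝ) ^ m.natDegree *
            ∏ f ∈ D, (1 - ((Fintype.card Fq : ℝ) ^ f.natDegree)⁻¹))
        ≤ Real.exp Real.eulerMascheroniConstant *
            (Real.log m.natDegree / Real.log (Fintype.card Fq) + 1)) := by
  classical
  have hq2 : 2 ≤ Fintype.card Fq := Fintype.one_lt_card
  set q : ℕ := Fintype.card Fq with hqdef
  set Q : ℝ := (q : ℝ) with hQdef
  have hQ2 : (2:ℝ) ≤ Q := by rw [hQdef]; exact_mod_cast hq2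
  have hQ0 : (0:ℝ) < Q := by linarith
  set n : ℕ := m.natDegree with hndef
  -- degrees of elements of D are positive
  have hDdeg : ∀ f ∈ D, 1 ≤ f.natDegree := by
    intro f hf
    obtain ⟨hfm, hfi, _⟩ := (hD f).mp hf
    by_contra h
    push_neg at h
    have h0 : f.natDegree = 0 := by omega
    exact hfi.not_isUnit ((hfm.natDegree_eq_zero.mp h0) ▸ isUnit_one)
  -- sum of degrees bounded by n
  have hdegsum : ∑ f ∈ D, f.natDegree ≤ n := by
    have hpair : (↑D : Set (Polynomial Fq)).Pairwise
        (Function.onFun IsCoprime (id : Polynomial Fq → Polynomial Fq)) := by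
      intro f hf g hg hne
      obtain ⟨hfm, hfi, _⟩ := (hD f).mp hf
      obtain ⟨hgm, hgi, _⟩ := (hD g).mp hg
      exact monic_irred_coprime hfm hfi hgm hgi hne
    have hdvd : (∏ f ∈ D, f) ∣ m :=
      Finset.prod_dvd_of_coprime hpair fun f hf => ((hD f).mp hf).2.2
    have h1 := Polynomial.natDegree_le_of_dvd hdvd hm
    rwa [Polynomial.natDegree_prod _ _ (fun f hf => ((hD f).mp hf).2.1.ne_zero)] at h1
  -- caps
  have hcap : ∀ d : ℕ, 1 ≤ d →
      (D.filter (fun f => f.natDegree = d)).card * d ≤ q ^ d := by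
    intro d hd
    refine card_degree_bound Fq _ d hd ?_
    intro f hf
    rw [Finset.mem_filter] at hf
    obtain ⟨hfm, hfi, _⟩ := (hD f).mp hf.1
    exact ⟨hfm, hfi, hf.2⟩
  have hcap1 : (D.filter (fun f => f.natDegree = 1)).card + 1 ≤ q := by
    refine card_linear_bound Fq m hT _ ?_
    intro f hf
    rw [Finset.mem_filter] at hf
    obtain ⟨hfm, _, hfd⟩ := (hD f).mp hf.1
    exact ⟨hfm, hfd, hf.2⟩
  -- the product
  have hfac : ∀ f ∈ D, 0 < 1 - (Q ^ f.natDegree)⁻¹ := by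
    intro f hf
    obtain ⟨h0, h1⟩ := Qpow_inv_mem hQ2 _ (hDdeg f hf)
    linarith
  set P : ℝ := ∏ f ∈ D, (1 - (Q ^ f.natDegree)⁻¹) with hPdef
  have hPpos : 0 < P := Finset.prod_pos hfac
  set S : ℝ := ∑ f ∈ D, cQ Q f.natDegree with hSdef
  have hlogP : Real.log P⁻¹ = S := by
    rw [Real.log_inv, hPdef, Real.log_prod (fun f hf => (hfac f hf).ne'),
      hSdef, ← Finset.sum_neg_distrib]
    rfl
  have hQn0 : Q ^ n ≠ 0 := by positivity
  have hratio : Q ^ n / (Q ^ n * P) = P⁻¹ := by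
    field_simp
  constructor
  · -- Part 1 : n ≤ q
    intro hle
    rw [hratio]
    rw [show Real.exp 1 = Real.exp 1 from rfl]
    have hS1 : S < 1 := by
      set D1 := D.filter (fun f => f.natDegree = 1) with hD1
      set D2 := D.filter (fun f => ¬ f.natDegree = 1) with hD2
      have hsplit : S = ∑ f ∈ D1, cQ Q f.natDegree + ∑ f ∈ D2, cQ Q f.natDegree :=
        (Finset.sum_filter_add_sum_filter_not D _ _).symm
      have h1 : ∑ f ∈ D1, cQ Q f.natDegree = (D1.card : ℝ) * cQ Q 1 := by
        rw [Finset.sum_congr rfl (fun f hf => by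
          rw [(Finset.mem_filter.mp hf).2]), Finset.sum_const, nsmul_eq_mul]
      have hc2pos := cQ_pos hQ2 2 (by norm_num)
      have hc1pos := cQ_pos hQ2 1 le_rfl
      have hc21 : cQ Q 2 ≤ cQ Q 1 := cQ_anti hQ2 le_rfl (by norm_num)
      have h2 : ∑ f ∈ D2, cQ Q f.natDegree
          ≤ ∑ f ∈ D2, (f.natDegree : ℝ) * (cQ Q 2 / 2) := by
        refine Finset.sum_le_sum fun f hf => ?_
        rw [Finset.mem_filter] at hf
        have hd2 : 2 ≤ f.natDegree := by
          have := hDdeg f hf.1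
          omega
        have hdR : (2:ℝ) ≤ (f.natDegree : ℝ) := by exact_mod_cast hd2
        have hle1 : cQ Q f.natDegree ≤ cQ Q 2 := cQ_anti hQ2 (by norm_num) hd2
        nlinarith
      have h3 : ∑ f ∈ D2, (f.natDegree : ℝ) ≤ (n:ℝ) - (D1.card : ℝ) := by
        have hnat : D1.card + ∑ f ∈ D2, f.natDegree ≤ n := by
          have hsplitn : ∑ f ∈ D1, f.natDegree + ∑ f ∈ D2, f.natDegree
              = ∑ f ∈ D, f.natDegree := Finset.sum_filter_add_sum_filter_not D _ _
          have hone : ∑ f ∈ D1, f.natDegree = D1.card := by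
            rw [Finset.sum_congr rfl (fun f hf => (Finset.mem_filter.mp hf).2),
              Finset.sum_const, smul_eq_mul, mul_one]
          omega
        have := (Nat.cast_le (α := ℝ)).mpr hnat
        push_cast at this
        linarith
      have hω1 : (D1.card : ℝ) ≤ Q - 1 := by
        have := (Nat.cast_le (α := ℝ)).mpr hcap1
        push_cast at this
        rw [hQdef]
        linarith
      have hω0 : (0:ℝ) ≤ (D1.card : ℝ) := by positivity
      have hnQ : (n:ℝ) ≤ Q := by
        rw [hQdef]; exact_mod_cast hle
      have hc2b := c2_half_bound hQ2
      have hc1b := c1_bound hQ2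
      obtain ⟨hinv0, hinv1⟩ := Qpow_inv_mem hQ2 2 (by norm_num)
      have hc2' := cQ_le hQ2 2 (by norm_num)
      -- chain
      have hT2 : ∑ f ∈ D2, (f.natDegree : ℝ) * (cQ Q 2 / 2)
          ≤ ((n:ℝ) - (D1.card : ℝ)) * (cQ Q 2 / 2) := by
        rw [← Finset.sum_mul]
        exact mul_le_mul_of_nonneg_right h3 (by linarith)
      have hfin : (D1.card : ℝ) * cQ Q 1 + ((n:ℝ) - (D1.card : ℝ)) * (cQ Q 2 / 2) < 1 := by
        nlinarith [mul_nonneg (sub_nonneg.mpr hnQ) (le_of_lt (half_pos hc2pos)),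
          mul_nonneg (by linarith : (0:ℝ) ≤ Q - 1 - (D1.card:ℝ))
            (by linarith : (0:ℝ) ≤ cQ Q 1 - cQ Q 2 / 2)]
      calc S = ∑ f ∈ D1, cQ Q f.natDegree + ∑ f ∈ D2, cQ Q f.natDegree := hsplit
      _ ≤ (D1.card : ℝ) * cQ Q 1 + ((n:ℝ) - (D1.card : ℝ)) * (cQ Q 2 / 2) := by
          rw [h1]; linarith
      _ < 1 := hfin
    have := (Real.log_lt_iff_lt_exp (inv_pos.mpr hPpos)).mp (by rw [hlogP]; exact hS1)
    exact this
  · -- Part 2 : q < n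
    intro hgt
    rw [hratio]
    have hn0 : n ≠ 0 := by omega
    set k : ℕ := Nat.log q n with hkdef
    have hq1 : 1 < q := hq2
    have hk1 : 1 ≤ k := by
      rw [hkdef]
      have : q ^ 1 ≤ n := by
        rw [pow_one]; omega
      exact (Nat.le_log_iff_pow_le hq1 hn0).mpr this
    have hkl : q ^ k ≤ n := Nat.pow_log_le_self q hn0
    have hkr : n < q ^ (k+1) := Nat.lt_pow_succ_log_self hq1 n
    have hlampos := lamQ_nonneg hQ2 (Q := Q) k
    have hck1pos := cQ_pos hQ2 (k+1) (by omega)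
    -- split into small and big degree parts
    set Ds := D.filter (fun f => f.natDegree ≤ k) with hDs
    set Db := D.filter (fun f => ¬ f.natDegree ≤ k) with hDb
    have hsplit : S = ∑ f ∈ Ds, cQ Q f.natDegree + ∑ f ∈ Db, cQ Q f.natDegree :=
      (Finset.sum_filter_add_sum_filter_not D _ _).symm
    have hlamk1 : cQ Q (k+1) = lamQ Q k * ((k:ℝ)+1) := by
      rw [lamQ]
      field_simp
    have hbig : ∑ f ∈ Db, cQ Q f.natDegree
        ≤ lamQ Q k * ∑ f ∈ Db, (f.natDegree : ℝ) := by
      rw [Finset.mul_sum]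
      refine Finset.sum_le_sum fun f hf => ?_
      rw [Finset.mem_filter] at hf
      have hdk : k + 1 ≤ f.natDegree := by omega
      have hdR : ((k:ℝ)+1) ≤ (f.natDegree : ℝ) := by exact_mod_cast hdk
      have h1 : cQ Q f.natDegree ≤ cQ Q (k+1) := cQ_anti hQ2 (by omega) hdk
      rw [hlamk1] at h1
      calc cQ Q f.natDegree ≤ lamQ Q k * ((k:ℝ)+1) := h1
      _ ≤ lamQ Q k * (f.natDegree : ℝ) := mul_le_mul_of_nonneg_left hdR hlampos
    have hbudget : ∑ f ∈ Db, (f.natDegree : ℝ) ≤ (n:ℝ) - ∑ f ∈ Ds, (f.natDegree : ℝ) := by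
      have hnat : ∑ f ∈ Ds, f.natDegree + ∑ f ∈ Db, f.natDegree ≤ n := by
        have heq : ∑ f ∈ Ds, f.natDegree + ∑ f ∈ Db, f.natDegree
            = ∑ f ∈ D, f.natDegree := Finset.sum_filter_add_sum_filter_not D _ _
        omega
      have := (Nat.cast_le (α := ℝ)).mpr hnat
      push_cast at this
      linarith
    have hstep1 : S ≤ lamQ Q k * (n:ℝ)
        + ∑ f ∈ Ds, (cQ Q f.natDegree - lamQ Q k * (f.natDegree : ℝ)) := by
      rw [hsplit, Finset.sum_sub_distrib]
      have h1 : ∑ f ∈ Db, cQ Q f.natDegree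
          ≤ lamQ Q k * ((n:ℝ) - ∑ f ∈ Ds, (f.natDegree : ℝ)) :=
        hbig.trans (mul_le_mul_of_nonneg_left hbudget hlampos)
      rw [← Finset.mul_sum]
      nlinarith [h1]
        -- fiberwise rewrite of the small part
    have hmaps : ∀ f ∈ Ds, f.natDegree ∈ Finset.Icc 1 k := by
      intro f hf
      rw [hDs, Finset.mem_filter] at hf
      exact Finset.mem_Icc.mpr ⟨hDdeg f hf.1, hf.2⟩
    have hfiber : ∑ f ∈ Ds, (cQ Q f.natDegree - lamQ Q k * (f.natDegree : ℝ))
        = ∑ d ∈ Finset.Icc 1 k, ((Ds.filter (fun f => f.natDegree = d)).card : ℝ)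
            * (cQ Q d - lamQ Q k * (d : ℝ)) := by
      rw [← Finset.sum_fiberwise_of_maps_to hmaps
        (fun f => cQ Q f.natDegree - lamQ Q k * (f.natDegree : ℝ))]
      refine Finset.sum_congr rfl fun d hd => ?_
      rw [Finset.sum_congr rfl (fun f hf => by
          rw [(Finset.mem_filter.mp hf).2]), Finset.sum_const, nsmul_eq_mul]
    have hval : ∀ d ∈ Finset.Icc 1 k, 0 ≤ cQ Q d - lamQ Q k * (d:ℝ) := by
      intro d hd
      rw [Finset.mem_Icc] at hd
      have h1 : cQ Q (k+1) ≤ cQ Q d := cQ_anti hQ2 hd.1 (by omega)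
      have h2 : (d:ℝ) ≤ (k:ℝ)+1 := by exact_mod_cast Nat.le_succ_of_le hd.2
      have h3 := mul_le_mul_of_nonneg_left h2 hlampos
      rw [← hlamk1] at h3
      linarith
    have hcard : ∀ d ∈ Finset.Icc 1 k,
        ((Ds.filter (fun f => f.natDegree = d)).card : ℝ)
          ≤ (if d = 1 then Q - 1 else Q ^ d / (d:ℝ)) := by
      intro d hd
      rw [Finset.mem_Icc] at hd
      have hsub : Ds.filter (fun f => f.natDegree = d)
          ⊆ D.filter (fun f => f.natDegree = d) := by
        intro f hf
        rw [Finset.mem_filter] at hf ⊢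
        rw [hDs, Finset.mem_filter] at hf
        exact ⟨hf.1.1, hf.2⟩
      have hle := Finset.card_le_card hsub
      by_cases h1 : d = 1
      · subst h1
        rw [if_pos rfl]
        have h2 : (Ds.filter (fun f => f.natDegree = 1)).card + 1 ≤ q := by omega
        have hcast := (Nat.cast_le (α := ℝ)).mpr h2
        push_cast at hcast
        rw [hQdef]
        linarith
      · rw [if_neg h1]
        have hcapd := hcap d hd.1
        have h2 : (Ds.filter (fun f => f.natDegree = d)).card * d ≤ q ^ d :=
          le_trans (Nat.mul_le_mul_right d hle) hcapd
        have hcast := (Nat.cast_le (α := ℝ)).mpr h2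
        push_cast at hcast
        have hdpos : (0:ℝ) < (d:ℝ) := by exact_mod_cast hd.1
        rw [le_div_iff₀ hdpos, hQdef]
        exact hcast
    have hsmall_le : ∑ d ∈ Finset.Icc 1 k,
          ((Ds.filter (fun f => f.natDegree = d)).card:ℝ) * (cQ Q d - lamQ Q k * (d:ℝ))
        ≤ ∑ d ∈ Finset.Icc 1 k,
          (if d = 1 then Q - 1 else Q ^ d / (d:ℝ)) * (cQ Q d - lamQ Q k * (d:ℝ)) :=
      Finset.sum_le_sum fun d hd => mul_le_mul_of_nonneg_right (hcard d hd) (hval d hd)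
    have hGid : lamQ Q k * (n:ℝ) + ∑ d ∈ Finset.Icc 1 k,
          (if d = 1 then Q - 1 else Q ^ d / (d:ℝ)) * (cQ Q d - lamQ Q k * (d:ℝ))
        = GQ Q k (n:ℝ) := by
      rw [GQ, Icc_one_split k hk1, Finset.sum_insert (by simp)]
      rw [if_pos rfl]
      have hco : ∑ d ∈ Finset.Icc 2 k,
            (if d = 1 then Q - 1 else Q ^ d / (d:ℝ)) * (cQ Q d - lamQ Q k * (d:ℝ))
          = ∑ d ∈ Finset.Icc 2 k, (Q ^ d / (d:ℝ)) * (cQ Q d - lamQ Q k * (d:ℝ)) := by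
        refine Finset.sum_congr rfl fun d hd => ?_
        rw [Finset.mem_Icc] at hd
        rw [if_neg (by omega)]
      rw [hco]
      push_cast
      ring
    have hSG : S ≤ GQ Q k (n:ℝ) := by
      rw [← hGid]
      refine hstep1.trans ?_
      rw [hfiber]
      linarith
    -- interpolation between Q^k and Q^(k+1)
    obtain ⟨x, hxdef⟩ : ∃ x : ℝ, x = Q ^ k := ⟨_, rfl⟩
    obtain ⟨y, hydef⟩ : ∃ y : ℝ, y = Q ^ (k+1) := ⟨_, rfl⟩
    have hx_le : x ≤ (n:ℝ) := by
      rw [hxdef, hQdef]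
      exact_mod_cast hkl
    have hy_ge : (n:ℝ) ≤ y := by
      rw [hydef, hQdef]
      exact_mod_cast hkr.le
    have hxy : x < y := by
      rw [hxdef, hydef, pow_succ]
      nlinarith [pow_pos hQ0 k]
    obtain ⟨a, hadef⟩ : ∃ a : ℝ, a = (y - (n:ℝ))/(y - x) := ⟨_, rfl⟩
    obtain ⟨b, hbdef⟩ : ∃ b : ℝ, b = ((n:ℝ) - x)/(y - x) := ⟨_, rfl⟩
    have hyx0 : (0:ℝ) < y - x := by linarith
    have ha : 0 ≤ a := by
      rw [hadef]; exact div_nonneg (by linarith) hyx0.le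
    have hb : 0 ≤ b := by
      rw [hbdef]; exact div_nonneg (by linarith) hyx0.le
    have hab : a + b = 1 := by
      rw [hadef, hbdef, ← add_div, div_eq_one_iff_eq hyx0.ne']
      ring
    have hcomb : a * x + b * y = (n:ℝ) := by
      rw [hadef, hbdef]
      field_simp
      ring
    have hGn : GQ Q k (n:ℝ) = a * GQ Q k x + b * GQ Q k y := by
      rw [← hcomb, GQ_affine Q k a b x y hab]
    have hGx := GQ_left hQ2 (Q := Q) k hk1
    have hGy := GQ_right hQ2 (Q := Q) k hk1
    rw [← hxdef] at hGx
    rw [← hydef] at hGy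
    have hlogQpos : 0 < Real.log Q := Real.log_pos (by linarith)
    have hk1R : (0:ℝ) < (k:ℝ) + 1 := by positivity
    have hk2R : (0:ℝ) < (k:ℝ) + 2 := by positivity
    have hxpos : (0:ℝ) < x := by rw [hxdef]; positivity
    have hypos : (0:ℝ) < y := by rw [hydef]; positivity
    have hcc1 := log_concave2 a b ((k:ℝ)+1) ((k:ℝ)+2) ha hb hab hk1R hk2R
    have hcc2 := log_concave2 a b x y ha hb hab hxpos hypos
    have hsum1 : a * ((k:ℝ)+1) + b * ((k:ℝ)+2) = (k:ℝ) + 1 + b := by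
      linear_combination ((k:ℝ)+1) * hab
    have hlogxk : Real.log x = (k:ℝ) * Real.log Q := by
      rw [hxdef, Real.log_pow]
    have hlogyk : Real.log y = ((k:ℝ)+1) * Real.log Q := by
      rw [hydef, Real.log_pow]
      push_cast
      ring
    have hkb_le : (k:ℝ) + b ≤ Real.log (n:ℝ) / Real.log Q := by
      rw [le_div_iff₀ hlogQpos]
      have h1 : a * Real.log x + b * Real.log y = ((k:ℝ)+b) * Real.log Q := by
        rw [hlogxk, hlogyk]
        linear_combination (k:ℝ) * Real.log Q * hab
      rw [hcomb] at hcc2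
      linarith
    have hfinal : S ≤ Real.eulerMascheroniConstant
        + Real.log (Real.log (n:ℝ)/Real.log Q + 1) := by
      have hstep2 : a * GQ Q k x + b * GQ Q k y
          ≤ Real.eulerMascheroniConstant
            + (a * Real.log ((k:ℝ)+1) + b * Real.log ((k:ℝ)+2)) := by
        have h1 := mul_le_mul_of_nonneg_left hGx ha
        have h2 := mul_le_mul_of_nonneg_left hGy hb
        have h3 : a * (Real.eulerMascheroniConstant + Real.log ((k:ℝ)+1))
            + b * (Real.eulerMascheroniConstant + Real.log ((k:ℝ)+2))
            = Real.eulerMascheroniConstant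
              + (a * Real.log ((k:ℝ)+1) + b * Real.log ((k:ℝ)+2)) := by
          linear_combination Real.eulerMascheroniConstant * hab
        linarith
      have h3 : a * Real.log ((k:ℝ)+1) + b * Real.log ((k:ℝ)+2)
          ≤ Real.log ((k:ℝ)+1+b) := by
        rw [← hsum1]
        exact hcc1
      have h4 : Real.log ((k:ℝ)+1+b) ≤ Real.log (Real.log (n:ℝ)/Real.log Q + 1) := by
        apply Real.log_le_log (by linarith)
        linarith
      linarith [hSG, hGn.le]
    have hLpos : (0:ℝ) < Real.log (n:ℝ)/Real.log Q + 1 := by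
      have hk0 : (0:ℝ) ≤ (k:ℝ) := by positivity
      linarith
    have hP1 : P⁻¹ ≤ Real.exp (Real.eulerMascheroniConstant
        + Real.log (Real.log (n:ℝ)/Real.log Q + 1)) :=
      (Real.log_le_iff_le_exp (inv_pos.mpr hPpos)).mp (by rw [hlogP]; exact hfinal)
    rwa [Real.exp_add, Real.exp_log hLpos] at hP1
end

section
/- Let x, y be integers with 1 ≤ y ≤ x < 2y (so ⌈x/y⌉ = 2), and let I ⊆ {1, …, x} with ρ = |I|/x > 0. Then there exists a set J of y consecutive integers contained in {1, …, x} such that |I ∩ J|/y ≤ (2/(ρ+1))·ρ. -/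
lemma covering_aux (a m x y : ℕ) (hx : 0 < x) (hy : 0 < y)
    (h : a * (m + x) ≤ 2 * m * y) :
    (a : ℝ) / y ≤ (2 / ((m : ℝ) / x + 1)) * ((m : ℝ) / x) := by
  have hx' : (0:ℝ) < x := by exact_mod_cast hx
  have hy' : (0:ℝ) < y := by exact_mod_cast hy
  have hmx : (0:ℝ) < (m:ℝ) + x := by positivity
  have hrw : (2 / ((m : ℝ) / x + 1)) * ((m : ℝ) / x) = 2 * m / ((m:ℝ) + x) := by
    rw [div_add' _ _ _ (ne_of_gt hx')]
    field_simp
  rw [hrw, div_le_div_iff₀ hy' hmx]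
  have h' : (a:ℝ) * (m + x) ≤ 2 * m * y := by exact_mod_cast h
  linarith

/-- **Covering lemma, case `u = 2`.** If `1 ≤ y ≤ x < 2y` and `I ⊆ {1, …, x}` is
nonempty with density `ρ = |I|/x`, then some block `J` of `y` consecutive integers
inside `{1, …, x}` satisfies `|I ∩ J|/y ≤ (2/(ρ+1))·ρ`. -/
theorem covering_lemma_two (x y : ℕ) (hy : 1 ≤ y) (hyx : y ≤ x) (hx : x < 2 * y)
    (I : Finset ℕ) (hI : I ⊆ Finset.Icc 1 x) (hne : 0 < I.card) :
    ∃ j : ℕ, 1 ≤ j ∧ j + y ≤ x + 1 ∧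
      ((I ∩ Finset.Ico j (j + y)).card : ℝ) / y ≤
        (2 / ((I.card : ℝ) / x + 1)) * ((I.card : ℝ) / x) := by
  set J1 := Finset.Ico 1 (1 + y) with hJ1
  set J2 := Finset.Ico (x - y + 1) (x - y + 1 + y) with hJ2
  set a := (I ∩ J1).card with hadef
  set b := (I ∩ J2).card with hbdef
  set m := I.card with hmdef
  set c := (I ∩ J1 ∩ (I ∩ J2)).card with hcdef
  have hm : m ≤ x := by
    have := Finset.card_le_card hI
    simpa using this
  have hcover : I ∩ J1 ∪ I ∩ J2 = I := by
    ext i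
    simp only [Finset.mem_union, Finset.mem_inter, hJ1, hJ2, Finset.mem_Ico]
    constructor
    · tauto
    · intro hi
      have h2 := hI hi
      rw [Finset.mem_Icc] at h2
      rcases le_or_gt i y with h3 | h3
      · exact Or.inl ⟨hi, by omega⟩
      · exact Or.inr ⟨hi, by omega⟩
  have hsum : m + c = a + b := by
    have := Finset.card_union_add_card_inter (I ∩ J1) (I ∩ J2)
    rw [hcover] at this
    omega
  have hc : c + x ≤ 2 * y := by
    have hsub : I ∩ J1 ∩ (I ∩ J2) ⊆ Finset.Ico (x - y + 1) (1 + y) := by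
      intro i hi
      simp only [Finset.mem_inter, hJ1, hJ2, Finset.mem_Ico] at hi ⊢
      omega
    have := Finset.card_le_card hsub
    rw [Nat.card_Ico] at this
    omega
  have ha : a ≤ m := Finset.card_le_card Finset.inter_subset_left
  have hb : b ≤ m := Finset.card_le_card Finset.inter_subset_left
  -- key inequality for the smaller of a, b
  have key : a * (m + x) ≤ 2 * m * y ∨ b * (m + x) ≤ 2 * m * y := by
    rcases le_total a b with hab | hab
    · left
      rcases le_or_gt (m + x) (2 * y) with h1 | h1
      · calc a * (m + x) ≤ m * (2 * y) := Nat.mul_le_mul ha h1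
          _ = 2 * m * y := by ring
      · -- here 2y - x < m ≤ x; use 2a ≤ m + c and c ≤ 2y - x
        have h2a : 2 * a ≤ m + c := by omega
        nlinarith [Nat.mul_le_mul h2a h2a]
    · right
      rcases le_or_gt (m + x) (2 * y) with h1 | h1
      · calc b * (m + x) ≤ m * (2 * y) := Nat.mul_le_mul hb h1
          _ = 2 * m * y := by ring
      · have h2b : 2 * b ≤ m + c := by omega
        nlinarith [Nat.mul_le_mul h2b h2b]
  have hx0 : 0 < x := by omega
  rcases key with h | h
  · exact ⟨1, le_refl 1, by omega, covering_aux a m x y hx0 hy h⟩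
  · refine ⟨x - y + 1, by omega, by omega, ?_⟩
    exact covering_aux b m x y hx0 hy h
end

section
/- Let x, y be integers with 1 ≤ y ≤ x and let u = ⌈x/y⌉ ≥ 2, and let I ⊆ {1, …, x} with ρ = |I|/x > 0. Then there exists a set J of y consecutive integers contained in {1, …, x} such that |I ∩ J|/y ≤ κρ, where κ = 2u/((u−1)ρ + (u+1)) if u ≥ 3, κ = 2/(ρ+1) if u = 2, and κ = 1 if y | x. In particular κ ≤ 2 always. -/
private lemma sum_sq_le : ∀ (B : ℕ) (s : Finset ℕ), B ≤ s.card → B * B ≤ 2 * (∑ i ∈ s, i) + B := by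
  intro B
  induction B with
  | zero => intro s _; simp
  | succ b ih =>
    intro s hs
    have hsne : s.Nonempty := Finset.card_pos.mp (by omega)
    have hMmem : s.max' hsne ∈ s := s.max'_mem hsne
    have hcard : s.card ≤ s.max' hsne + 1 := by
      have hsub : s ⊆ Finset.range (s.max' hsne + 1) := by
        intro i hi
        rw [Finset.mem_range, Nat.lt_succ_iff]
        exact Finset.le_max' s i hi
      simpa using Finset.card_le_card hsub
    have hcarde : (s.erase (s.max' hsne)).card = s.card - 1 := Finset.card_erase_of_mem hMmem
    have hb : b ≤ (s.erase (s.max' hsne)).card := by omega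
    have hsum : s.max' hsne + ∑ i ∈ s.erase (s.max' hsne), i = ∑ i ∈ s, i :=
      Finset.add_sum_erase s (fun i => i) hMmem
    have hIH := ih (s.erase (s.max' hsne)) hb
    have hbM : b ≤ s.max' hsne := by omega
    nlinarith [hIH, hbM, hsum]

private lemma blocks_sum (y q : ℕ) (I : Finset ℕ) :
    ∑ k ∈ Finset.range q, (I ∩ Finset.Ico (1 + k * y) (1 + k * y + y)).card ≤ I.card := by
  classical
  have hdisj : ∀ a ∈ Finset.range q, ∀ b ∈ Finset.range q, a ≠ b →
      Disjoint (I ∩ Finset.Ico (1 + a * y) (1 + a * y + y))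
        (I ∩ Finset.Ico (1 + b * y) (1 + b * y + y)) := by
    intro a _ b _ hab
    refine Finset.disjoint_left.mpr fun i hia hib => ?_
    rw [Finset.mem_inter, Finset.mem_Ico] at hia hib
    rcases Nat.lt_or_ge a b with h | h
    · have h1 : (a + 1) * y ≤ b * y := Nat.mul_le_mul h le_rfl
      rw [add_one_mul] at h1
      have h2 := hia.2.2
      have h3 := hib.2.1
      linarith
    · have h' : b < a := lt_of_le_of_ne h (fun he => hab he.symm)
      have h1 : (b + 1) * y ≤ a * y := Nat.mul_le_mul h' le_rfl
      rw [add_one_mul] at h1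
      have h2 := hib.2.2
      have h3 := hia.2.1
      linarith
  calc ∑ k ∈ Finset.range q, (I ∩ Finset.Ico (1 + k * y) (1 + k * y + y)).card
      = ((Finset.range q).biUnion fun k => I ∩ Finset.Ico (1 + k * y) (1 + k * y + y)).card :=
        (Finset.card_biUnion hdisj).symm
    _ ≤ I.card := Finset.card_le_card (by
        intro i hi
        obtain ⟨k, _, hk⟩ := Finset.mem_biUnion.mp hi
        exact (Finset.mem_inter.mp hk).1)

private lemma sliding_bound (x y : ℕ) (hy : 1 ≤ y) (hyx : y ≤ x)
    (I : Finset ℕ) (hI : I ⊆ Finset.Icc 1 x) (B : ℕ)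
    (hmin : ∀ j, 1 ≤ j → j + y ≤ x + 1 → B ≤ (I ∩ Finset.Ico j (j + y)).card) :
    (x + 1) * B + B * B ≤ y * I.card + B + y * B := by
  classical
  set N := x - y + 1 with hN_def
  have hN1 : 1 ≤ N := by omega
  have hNy : N + y = x + 1 := by omega
  -- double counting
  have h1 : ∀ j, (I ∩ Finset.Ico j (j + y)).card
      = ∑ i ∈ I, if j ≤ i ∧ i < j + y then 1 else 0 := by
    intro j
    rw [← Finset.card_filter]
    congr 1
    ext i
    simp [Finset.mem_inter, Finset.mem_Ico, Finset.mem_filter]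
  have hcount : ∑ j ∈ Finset.Icc 1 N, (I ∩ Finset.Ico j (j + y)).card
      = ∑ i ∈ I, ((Finset.Icc 1 N).filter (fun j => j ≤ i ∧ i < j + y)).card := by
    calc ∑ j ∈ Finset.Icc 1 N, (I ∩ Finset.Ico j (j + y)).card
        = ∑ j ∈ Finset.Icc 1 N, ∑ i ∈ I, if j ≤ i ∧ i < j + y then 1 else 0 :=
          Finset.sum_congr rfl fun j _ => h1 j
      _ = ∑ i ∈ I, ∑ j ∈ Finset.Icc 1 N, if j ≤ i ∧ i < j + y then 1 else 0 := Finset.sum_comm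
      _ = ∑ i ∈ I, ((Finset.Icc 1 N).filter (fun j => j ≤ i ∧ i < j + y)).card :=
          Finset.sum_congr rfl fun i _ => (Finset.card_filter _ _).symm
  have hw : ∀ i ∈ I, ((Finset.Icc 1 N).filter (fun j => j ≤ i ∧ i < j + y)).card
      + (y - i) + (i - N) = y := by
    intro i hi
    have hi' := hI hi
    rw [Finset.mem_Icc] at hi'
    have heq : (Finset.Icc 1 N).filter (fun j => j ≤ i ∧ i < j + y)
        = Finset.Icc (max 1 (i + 1 - y)) (min N i) := by
      ext j
      simp only [Finset.mem_filter, Finset.mem_Icc]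
      omega
    rw [heq, Nat.card_Icc]
    omega
  have htot : y * I.card = (∑ j ∈ Finset.Icc 1 N, (I ∩ Finset.Ico j (j + y)).card)
      + (∑ i ∈ I, (y - i)) + (∑ i ∈ I, (i - N)) := by
    rw [hcount, ← Finset.sum_add_distrib, ← Finset.sum_add_distrib]
    have hyI : y * I.card = ∑ _i ∈ I, y := by
      rw [Finset.sum_const, smul_eq_mul, mul_comm]
    rw [hyI]
    exact Finset.sum_congr rfl fun i hi => (hw i hi).symm
  have hS4 : N * B ≤ ∑ j ∈ Finset.Icc 1 N, (I ∩ Finset.Ico j (j + y)).card := by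
    have h := Finset.card_nsmul_le_sum (Finset.Icc 1 N)
        (fun j => (I ∩ Finset.Ico j (j + y)).card) B
        (fun j hj => by
          rw [Finset.mem_Icc] at hj
          exact hmin j hj.1 (by omega))
    simpa [Nat.card_Icc, smul_eq_mul] using h
  have hDL : B * B ≤ 2 * (∑ i ∈ I, (y - i)) + B := by
    have hf1 : B ≤ (I ∩ Finset.Ico 1 (1 + y)).card := hmin 1 le_rfl (by omega)
    have hinj : ∀ a ∈ I ∩ Finset.Ico 1 (1 + y), ∀ b ∈ I ∩ Finset.Ico 1 (1 + y),
        y - a = y - b → a = b := by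
      intro a ha b hb hab
      rw [Finset.mem_inter, Finset.mem_Ico] at ha hb
      omega
    have hcard : ((I ∩ Finset.Ico 1 (1 + y)).image fun i => y - i).card
        = (I ∩ Finset.Ico 1 (1 + y)).card :=
      Finset.card_image_of_injOn fun a ha b hb hab => hinj a ha b hb hab
    have hsum : ∑ t ∈ (I ∩ Finset.Ico 1 (1 + y)).image (fun i => y - i), t
        = ∑ i ∈ I ∩ Finset.Ico 1 (1 + y), (y - i) := Finset.sum_image hinj
    have h2 := sum_sq_le B ((I ∩ Finset.Ico 1 (1 + y)).image fun i => y - i)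
      (by rw [hcard]; exact hf1)
    have h3 : ∑ i ∈ I ∩ Finset.Ico 1 (1 + y), (y - i) ≤ ∑ i ∈ I, (y - i) :=
      Finset.sum_le_sum_of_subset Finset.inter_subset_left
    calc B * B ≤ 2 * (∑ t ∈ (I ∩ Finset.Ico 1 (1 + y)).image (fun i => y - i), t) + B := h2
      _ = 2 * (∑ i ∈ I ∩ Finset.Ico 1 (1 + y), (y - i)) + B := by rw [hsum]
      _ ≤ 2 * (∑ i ∈ I, (y - i)) + B := Nat.add_le_add_right (Nat.mul_le_mul_left 2 h3) B
  have hDR : B * B ≤ 2 * (∑ i ∈ I, (i - N)) + B := by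
    have hfN : B ≤ (I ∩ Finset.Ico N (N + y)).card := hmin N hN1 (by omega)
    have hinj : ∀ a ∈ I ∩ Finset.Ico N (N + y), ∀ b ∈ I ∩ Finset.Ico N (N + y),
        a - N = b - N → a = b := by
      intro a ha b hb hab
      rw [Finset.mem_inter, Finset.mem_Ico] at ha hb
      omega
    have hcard : ((I ∩ Finset.Ico N (N + y)).image fun i => i - N).card
        = (I ∩ Finset.Ico N (N + y)).card :=
      Finset.card_image_of_injOn fun a ha b hb hab => hinj a ha b hb hab
    have hsum : ∑ t ∈ (I ∩ Finset.Ico N (N + y)).image (fun i => i - N), t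
        = ∑ i ∈ I ∩ Finset.Ico N (N + y), (i - N) := Finset.sum_image hinj
    have h2 := sum_sq_le B ((I ∩ Finset.Ico N (N + y)).image fun i => i - N)
      (by rw [hcard]; exact hfN)
    have h3 : ∑ i ∈ I ∩ Finset.Ico N (N + y), (i - N) ≤ ∑ i ∈ I, (i - N) :=
      Finset.sum_le_sum_of_subset Finset.inter_subset_left
    calc B * B ≤ 2 * (∑ t ∈ (I ∩ Finset.Ico N (N + y)).image (fun i => i - N), t) + B := h2
      _ = 2 * (∑ i ∈ I ∩ Finset.Ico N (N + y), (i - N)) + B := by rw [hsum]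
      _ ≤ 2 * (∑ i ∈ I, (i - N)) + B := Nat.add_le_add_right (Nat.mul_le_mul_left 2 h3) B
  rw [← hNy, add_mul]
  linarith [htot, hS4, hDL, hDR]



set_option maxHeartbeats 2000000 in
/-- **Covering lemma (full form).** Let `1 ≤ y ≤ x`, `u = ⌈x/y⌉ ≥ 2`, and let
`I ⊆ {1, …, x}` be nonempty with density `ρ = |I|/x`. Then with
`κ = 1` if `y ∣ x`, `κ = 2/(ρ+1)` if `u = 2`, and `κ = 2u/((u−1)ρ + (u+1))` if
`u ≥ 3`, we have `κ ≤ 2`, and some block `J` of `y` consecutive integers inside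
`{1, …, x}` satisfies `|I ∩ J|/y ≤ κ·ρ`. -/
theorem covering_lemma (x y : ℕ) (hy : 1 ≤ y) (hyx : y ≤ x)
    (I : Finset ℕ) (hI : I ⊆ Finset.Icc 1 x) (hne : 0 < I.card)
    (hu : 2 ≤ (x + y - 1) / y) :
    (if y ∣ x then (1 : ℝ)
      else if (x + y - 1) / y = 2 then 2 / ((I.card : ℝ) / x + 1)
      else 2 * ((x + y - 1) / y : ℕ) /
        ((((x + y - 1) / y : ℕ) - 1 : ℝ) * ((I.card : ℝ) / x) + (((x + y - 1) / y : ℕ) + 1)))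
      ≤ 2 ∧
    ∃ j : ℕ, 1 ≤ j ∧ j + y ≤ x + 1 ∧
      ((I ∩ Finset.Ico j (j + y)).card : ℝ) / y ≤
        (if y ∣ x then (1 : ℝ)
          else if (x + y - 1) / y = 2 then 2 / ((I.card : ℝ) / x + 1)
          else 2 * ((x + y - 1) / y : ℕ) /
            ((((x + y - 1) / y : ℕ) - 1 : ℝ) * ((I.card : ℝ) / x) + (((x + y - 1) / y : ℕ) + 1)))
        * ((I.card : ℝ) / x) := by
  classical
  have hy0 : 0 < y := hy
  have hx0 : 0 < x := lt_of_lt_of_le hy0 hyx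
  have hmx : I.card ≤ x := by
    have h := Finset.card_le_card hI
    simpa using h
  obtain ⟨j₀, hj₀mem, hj₀min⟩ := Finset.exists_min_image (Finset.Icc 1 (x - y + 1))
      (fun j => (I ∩ Finset.Ico j (j + y)).card) ⟨1, Finset.mem_Icc.mpr ⟨le_rfl, by omega⟩⟩
  rw [Finset.mem_Icc] at hj₀mem
  set B := (I ∩ Finset.Ico j₀ (j₀ + y)).card with hB_def
  have hmin : ∀ j, 1 ≤ j → j + y ≤ x + 1 → B ≤ (I ∩ Finset.Ico j (j + y)).card := fun j h1 h2 =>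
    hj₀min j (Finset.mem_Icc.mpr ⟨h1, by omega⟩)
  have hBy : B ≤ y := by
    have h1 : B ≤ (Finset.Ico j₀ (j₀ + y)).card := Finset.card_le_card Finset.inter_subset_right
    simpa using h1
  have hX0 : (0:ℝ) < (x:ℝ) := by exact_mod_cast hx0
  have hY0 : (0:ℝ) < (y:ℝ) := by exact_mod_cast hy0
  have hM0 : (0:ℝ) < (I.card:ℝ) := by exact_mod_cast hne
  have hB0 : (0:ℝ) ≤ (B:ℝ) := Nat.cast_nonneg _
  have hBYr : (B:ℝ) ≤ (y:ℝ) := by exact_mod_cast hBy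
  have hMXr : (I.card:ℝ) ≤ (x:ℝ) := by exact_mod_cast hmx
  have hYXr : (y:ℝ) ≤ (x:ℝ) := by exact_mod_cast hyx
  by_cases hdvd : y ∣ x
  · simp only [if_pos hdvd]
    refine ⟨by norm_num, j₀, hj₀mem.1, by omega, ?_⟩
    rw [← hB_def]
    have hqy : x / y * y = x := Nat.div_mul_cancel hdvd
    have hqB : x / y * B ≤ I.card := by
      calc x / y * B = ∑ _k ∈ Finset.range (x / y), B := by
            rw [Finset.sum_const, smul_eq_mul, Finset.card_range]
        _ ≤ ∑ k ∈ Finset.range (x / y), (I ∩ Finset.Ico (1 + k * y) (1 + k * y + y)).card := by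
            refine Finset.sum_le_sum fun k hk => ?_
            rw [Finset.mem_range] at hk
            have hky : (k + 1) * y ≤ x / y * y := Nat.mul_le_mul (by omega) le_rfl
            rw [hqy, add_one_mul] at hky
            exact hmin _ (Nat.le_add_right 1 _) (by linarith)
        _ ≤ I.card := blocks_sum y (x / y) I
    rw [one_mul, div_le_div_iff₀ hY0 hX0]
    have hfin : B * x ≤ I.card * y := by
      have h2 : x / y * B * y ≤ I.card * y := Nat.mul_le_mul hqB le_rfl
      have h3 : x / y * B * y = B * x := by rw [mul_comm (x / y) B, mul_assoc, hqy]
      rw [← h3]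
      exact h2
    exact_mod_cast hfin
  · have hdd : x + y - 1 = (x - 1) + y := by omega
    have hud : (x + y - 1) / y = (x - 1) / y + 1 := by rw [hdd, Nat.add_div_right _ hy0]
    set d := (x - 1) / y with hd_def
    rw [hud] at hu
    simp only [hud, if_neg hdvd]
    have hdy1 : d * y + 1 ≤ x := by
      have h := Nat.div_mul_le_self (x - 1) y
      rw [← hd_def] at h
      zify [show 1 ≤ x from hx0] at h ⊢
      linarith
    have hdy2 : x ≤ d * y + y := by
      have h := Nat.div_add_mod (x - 1) y
      have h2 : (x - 1) % y < y := Nat.mod_lt _ hy0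
      rw [← hd_def] at h
      zify [show 1 ≤ x from hx0] at h h2 ⊢
      linarith
    set sN := d * y + y - x with hsN_def
    have hs_add : x + sN = d * y + y := Nat.add_sub_cancel' hdy2
    have hne' : x ≠ d * y + y := fun hcontra => hdvd ⟨d + 1, by rw [hcontra]; ring⟩
    have hsN1 : 1 ≤ sN := hsN_def ▸ Nat.sub_pos_of_lt (lt_of_le_of_ne hdy2 hne')
    have hSx : (x:ℝ) + (sN:ℝ) = (d:ℝ) * y + y := by exact_mod_cast hs_add
    have hS1 : (1:ℝ) ≤ (sN:ℝ) := by exact_mod_cast hsN1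
    have hXdy : (d:ℝ) * y + 1 ≤ (x:ℝ) := by exact_mod_cast hdy1
    have hSYr : (sN:ℝ) ≤ (y:ℝ) - 1 := by linarith
    have hdB : d * B ≤ I.card := by
      calc d * B = ∑ _k ∈ Finset.range d, B := by
            rw [Finset.sum_const, smul_eq_mul, Finset.card_range]
        _ ≤ ∑ k ∈ Finset.range d, (I ∩ Finset.Ico (1 + k * y) (1 + k * y + y)).card := by
            refine Finset.sum_le_sum fun k hk => ?_
            rw [Finset.mem_range] at hk
            have hky : (k + 1) * y ≤ d * y := Nat.mul_le_mul (by omega) le_rfl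
            rw [add_one_mul] at hky
            exact hmin _ (Nat.le_add_right 1 _) (by linarith)
        _ ≤ I.card := blocks_sum y d I
    have hP2r : (d:ℝ) * B ≤ (I.card:ℝ) := by exact_mod_cast hdB
    have hP1r : ((x:ℝ) - y + B) * B ≤ (y:ℝ) * I.card := by
      have h := sliding_bound x y hy hyx I hI B hmin
      have h' : ((x:ℝ) + 1) * B + (B:ℝ) * B ≤ (y:ℝ) * I.card + B + (y:ℝ) * B := by
        exact_mod_cast h
      nlinarith [h']
    push_cast
    have hρ0 : (0:ℝ) ≤ (I.card:ℝ)/x := by positivity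
    by_cases hd1 : d = 1
    · simp only [if_pos hd1]
      have hd1r : (d:ℝ) = 1 := by rw [hd1]; norm_num
      constructor
      · rw [div_le_iff₀ (by positivity : (0:ℝ) < (I.card:ℝ)/x + 1)]
        linarith
      · refine ⟨j₀, hj₀mem.1, by omega, ?_⟩
        rw [← hB_def]
        have hMX0 : (0:ℝ) < (I.card:ℝ) + x := by positivity
        have hrw : 2 / ((I.card:ℝ)/x + 1) * ((I.card:ℝ)/x) = 2 * (I.card:ℝ) / ((I.card:ℝ) + x) := by
          field_simp
        rw [hrw, div_le_div_iff₀ hY0 hMX0]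
        by_cases hBS : B ≤ sN
        · have hBSr : (B:ℝ) ≤ (sN:ℝ) := by exact_mod_cast hBS
          have hBM : (B:ℝ) ≤ (I.card:ℝ) := by nlinarith [hP2r]
          nlinarith [mul_nonneg (sub_nonneg.mpr hBM) (by linarith : (0:ℝ) ≤ 2*(y:ℝ) - B),
                     mul_nonneg hB0 (sub_nonneg.mpr hBSr), hSx, hd1r]
        · have hSBr : (sN:ℝ) ≤ (B:ℝ) := by exact_mod_cast (le_of_not_ge hBS)
          have t1 : (0:ℝ) ≤ 2*(y:ℝ) - B := by linarith
          have idq : ((x:ℝ) - y + B) * (2*(y:ℝ) - B) - (x:ℝ)*y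
              = ((B:ℝ) - sN)*((y:ℝ) - B) + ((y:ℝ) - B)*((x:ℝ) + sN - 2*y) := by ring
          have hz : (x:ℝ) + (sN:ℝ) - 2*y = 0 := by
            rw [hd1r] at hSx
            linarith
          have hq : (x:ℝ)*y ≤ ((x:ℝ) - y + B)*(2*(y:ℝ) - B) := by
            have n1 : (0:ℝ) ≤ ((B:ℝ) - sN)*((y:ℝ) - B) :=
              mul_nonneg (by linarith) (by linarith)
            have n2 : ((y:ℝ) - B)*((x:ℝ) + sN - 2*y) = 0 := by rw [hz, mul_zero]
            linarith [idq, n1, n2]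
          have c3 : (((x:ℝ) - y + B) * B) * (2*(y:ℝ) - B) ≤ ((y:ℝ) * I.card) * (2*(y:ℝ) - B) :=
            mul_le_mul_of_nonneg_right hP1r t1
          have c4 : (B:ℝ) * ((x:ℝ)*y) ≤ (B:ℝ) * (((x:ℝ) - y + B)*(2*(y:ℝ) - B)) :=
            mul_le_mul_of_nonneg_left hq hB0
          have goalY : (y:ℝ) * ((B:ℝ) * ((I.card:ℝ) + x)) ≤ (y:ℝ) * (2 * (I.card:ℝ) * y) := by
            nlinarith [c3, c4]
          exact le_of_mul_le_mul_left goalY hY0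
    · have hd2 : 2 ≤ d := by omega
      have hd2r : (2:ℝ) ≤ (d:ℝ) := by exact_mod_cast hd2
      have hd0r : (0:ℝ) ≤ (d:ℝ) := Nat.cast_nonneg d
      simp only [if_neg hd1]
      have e1 : ((d:ℝ) + 1 - 1) * ((I.card:ℝ)/x) + ((d:ℝ) + 1 + 1)
          = (d:ℝ) * ((I.card:ℝ)/x) + ((d:ℝ) + 2) := by ring
      simp only [e1]
      have hden : (0:ℝ) < (d:ℝ) * ((I.card:ℝ)/x) + ((d:ℝ) + 2) := by positivity
      constructor
      · rw [div_le_iff₀ hden]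
        nlinarith [mul_nonneg hd0r hρ0]
      · refine ⟨j₀, hj₀mem.1, by omega, ?_⟩
        rw [← hB_def]
        have hden2 : (0:ℝ) < (d:ℝ) * (I.card:ℝ) + ((d:ℝ) + 2) * x := by positivity
        have hrw : 2 * ((d:ℝ) + 1) / ((d:ℝ) * ((I.card:ℝ)/x) + ((d:ℝ) + 2)) * ((I.card:ℝ)/x)
            = 2 * ((d:ℝ) + 1) * (I.card:ℝ) / ((d:ℝ) * (I.card:ℝ) + ((d:ℝ) + 2) * x) := by
          rw [div_mul_eq_mul_div, div_eq_div_iff (ne_of_gt hden) (ne_of_gt hden2)]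
          field_simp
        rw [hrw, div_le_div_iff₀ hY0 hden2]
        have t1 : (0:ℝ) ≤ 2*((d:ℝ)+1)*y - (d:ℝ)*B := by
          nlinarith [mul_le_mul_of_nonneg_left hBYr hd0r, mul_nonneg hd0r hY0.le]
        by_cases hBS : B ≤ sN
        · have hBSr : (B:ℝ) ≤ (sN:ℝ) := by exact_mod_cast hBS
          have id2 : ((d:ℝ) * (2*((d:ℝ)+1)*(y:ℝ) - (d:ℝ)*B) - ((d:ℝ)+2)*x)
              = ((d:ℝ)+1)*((d:ℝ)-2)*((y:ℝ) - sN) + (d:ℝ)^2*((sN:ℝ) - B)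
                + ((d:ℝ)+2)*(((d:ℝ)+1)*(y:ℝ) - x - sN) := by ring
          have hz0 : ((d:ℝ)+1)*(y:ℝ) - x - sN = 0 := by
            have : ((d:ℝ)+1)*(y:ℝ) = (d:ℝ)*y + y := by ring
            linarith [hSx]
          have key2 : ((d:ℝ)+2)*(x:ℝ) ≤ (d:ℝ) * (2*((d:ℝ)+1)*y - (d:ℝ)*B) := by
            have n1 : (0:ℝ) ≤ ((d:ℝ)+1)*((d:ℝ)-2)*((y:ℝ) - sN) :=
              mul_nonneg (mul_nonneg (by linarith) (by linarith)) (by linarith)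
            have n2 : (0:ℝ) ≤ (d:ℝ)^2*((sN:ℝ) - B) := mul_nonneg (sq_nonneg _) (by linarith)
            have n3 : ((d:ℝ)+2)*(((d:ℝ)+1)*(y:ℝ) - x - sN) = 0 := by rw [hz0, mul_zero]
            linarith [id2, n1, n2, n3]
          have c1 : (B:ℝ) * (((d:ℝ)+2)*x) ≤ (B:ℝ) * ((d:ℝ)*(2*((d:ℝ)+1)*y - (d:ℝ)*B)) :=
            mul_le_mul_of_nonneg_left key2 hB0
          have c2 : (0:ℝ) ≤ ((I.card:ℝ) - (d:ℝ)*B) * (2*((d:ℝ)+1)*y - (d:ℝ)*B) :=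
            mul_nonneg (by linarith [hP2r]) t1
          nlinarith [c1, c2]
        · have hSBr : (sN:ℝ) ≤ (B:ℝ) := by exact_mod_cast (le_of_not_ge hBS)
          have idq : ((x:ℝ) - y + B) * (2*((d:ℝ)+1)*y - (d:ℝ)*B) - ((d:ℝ)+2)*x*y
              = ((y:ℝ) - B)*((d:ℝ)*((B:ℝ) - sN) + ((d:ℝ)+1)*((d:ℝ)-2)*y)
                + (d:ℝ)*((y:ℝ) - B)*((x:ℝ) + sN - ((d:ℝ)+1)*y) := by ring
          have hz0 : (x:ℝ) + (sN:ℝ) - ((d:ℝ)+1)*y = 0 := by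
            have : ((d:ℝ)+1)*(y:ℝ) = (d:ℝ)*y + y := by ring
            linarith [hSx]
          have keyQ : ((d:ℝ)+2)*(x:ℝ)*y ≤ ((x:ℝ) - y + B) * (2*((d:ℝ)+1)*y - (d:ℝ)*B) := by
            have n1 : (0:ℝ) ≤ ((y:ℝ) - B)*((d:ℝ)*((B:ℝ) - sN) + ((d:ℝ)+1)*((d:ℝ)-2)*y) :=
              mul_nonneg (by linarith)
                (add_nonneg (mul_nonneg hd0r (by linarith))
                  (mul_nonneg (mul_nonneg (by linarith) (by linarith)) hY0.le))
            have n2 : (d:ℝ)*((y:ℝ) - B)*((x:ℝ) + sN - ((d:ℝ)+1)*y) = 0 := by rw [hz0, mul_zero]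
            linarith [idq, n1, n2]
          have c3 : (((x:ℝ) - y + B) * B) * (2*((d:ℝ)+1)*y - (d:ℝ)*B)
              ≤ ((y:ℝ) * I.card) * (2*((d:ℝ)+1)*y - (d:ℝ)*B) :=
            mul_le_mul_of_nonneg_right hP1r t1
          have c4 : (B:ℝ) * (((d:ℝ)+2)*x*y) ≤ (B:ℝ) * (((x:ℝ) - y + B)*(2*((d:ℝ)+1)*y - (d:ℝ)*B)) :=
            mul_le_mul_of_nonneg_left keyQ hB0
          have goalY : (y:ℝ) * ((B:ℝ) * ((d:ℝ)*I.card + ((d:ℝ)+2)*x))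
              ≤ (y:ℝ) * (2*((d:ℝ)+1)*I.card*y) := by
            nlinarith [c3, c4]
          exact le_of_mul_le_mul_left goalY hY0
end
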